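/- arXiv:2601.16285 — 6 statements merged into one kernel-verified Lean document; each statement's English description precedes it below -/
import Mathlib

section
/- The sequence c_N is strictly increasing for integers N ≥ 3 (c_M < c_N whenever 3 ≤ M < N are integers), and c_N tends to 1 as N → ∞. Consequently c_N ≤ 1 for every integer N ≥ 3. -/
open Real Filter Topology

noncomputable def schwarzChristoffelConst (N : ℕ) : ℝ :=
  Real.sqrt ((Real.Gamma (1 - 1 / N)) ^ 2 * Real.Gamma (1 + 2 / N) /
    ((Real.Gamma (1 + 1 / N)) ^ 2 * Real.Gamma (1 - 2 / N)))

/-- auxiliary: the quantity under the square root, as a function of `x = 1/N`. -/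
noncomputable def scA (x : ℝ) : ℝ :=
  Real.Gamma (1 - x) ^ 2 * Real.Gamma (1 + 2 * x) /
    (Real.Gamma (1 + x) ^ 2 * Real.Gamma (1 - 2 * x))

/-- auxiliary: the `k`-th factor in the Euler-product representation of `scA`. -/
noncomputable def scq (x : ℝ) (k : ℕ) : ℝ :=
  (1 + x + k) ^ 2 * (1 - 2 * x + k) / ((1 - x + k) ^ 2 * (1 + 2 * x + k))

lemma sc_eq (N : ℕ) : schwarzChristoffelConst N = Real.sqrt (scA (1 / N)) := by
  simp [schwarzChristoffelConst, scA, mul_one_div, div_eq_mul_inv]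

lemma scq_pos {x : ℝ} (hx : 0 < x) (hx2 : x < 1 / 2) (k : ℕ) : 0 < scq x k := by
  have hk : (0:ℝ) ≤ k := k.cast_nonneg
  have h1 : (0:ℝ) < 1 + x + k := by linarith
  have h2 : (0:ℝ) < 1 - 2 * x + k := by linarith
  have h3 : (0:ℝ) < 1 - x + k := by linarith
  have h4 : (0:ℝ) < 1 + 2 * x + k := by linarith
  unfold scq; positivity

set_option maxHeartbeats 1000000 in
lemma scq_lt {x y : ℝ} (hy : 0 < y) (hyx : y < x) (hx2 : x < 1 / 2) (k : ℕ) :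
    scq x k < scq y k := by
  have hk : (0:ℝ) ≤ k := k.cast_nonneg
  have hx : 0 < x := hy.trans hyx
  have hy2 : y < 1 / 2 := hyx.trans hx2
  have h1 : (0:ℝ) < 1 - x + k := by linarith
  have h2 : (0:ℝ) < 1 + 2 * x + k := by linarith
  have h3 : (0:ℝ) < 1 - y + k := by linarith
  have h4 : (0:ℝ) < 1 + 2 * y + k := by linarith
  unfold scq
  rw [div_lt_div_iff₀ (by positivity) (by positivity)]
  set a : ℝ := 1 + (k:ℝ) with ha
  have key : (1 + y + k) ^ 2 * (1 - 2 * y + k) * ((1 - x + k) ^ 2 * (1 + 2 * x + k))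
      - (1 + x + k) ^ 2 * (1 - 2 * x + k) * ((1 - y + k) ^ 2 * (1 + 2 * y + k))
      = 4 * a * (x - y) * (a ^ 2 * (x ^ 2 + x * y + y ^ 2) - 3 * x ^ 2 * y ^ 2) := by
    ring
  have ha1 : (1:ℝ) ≤ a := by rw [ha]; linarith
  have ha2 : (1:ℝ) ≤ a ^ 2 := by nlinarith
  have s1 : 3 * (x * y) ≤ x ^ 2 + x * y + y ^ 2 := by nlinarith [sq_nonneg (x - y)]
  have s2 : x ^ 2 + x * y + y ^ 2 ≤ a ^ 2 * (x ^ 2 + x * y + y ^ 2) :=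
    le_mul_of_one_le_left (by positivity) ha2
  have hxy1 : x * y < 1 := by nlinarith
  have s3 : 3 * x ^ 2 * y ^ 2 < 3 * (x * y) := by nlinarith [mul_pos hx hy]
  have hfac : 3 * x ^ 2 * y ^ 2 < a ^ 2 * (x ^ 2 + x * y + y ^ 2) := by linarith
  nlinarith [mul_pos (mul_pos (by linarith : (0:ℝ) < 4 * a) (by linarith : (0:ℝ) < x - y))
    (by linarith : (0:ℝ) < a ^ 2 * (x ^ 2 + x * y + y ^ 2) - 3 * x ^ 2 * y ^ 2)]

lemma scA_pos {x : ℝ} (hx : 0 < x) (hx2 : x < 1 / 2) : 0 < scA x := by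
  have g1 := Real.Gamma_pos_of_pos (by linarith : (0:ℝ) < 1 - x)
  have g2 := Real.Gamma_pos_of_pos (by linarith : (0:ℝ) < 1 + 2 * x)
  have g3 := Real.Gamma_pos_of_pos (by linarith : (0:ℝ) < 1 + x)
  have g4 := Real.Gamma_pos_of_pos (by linarith : (0:ℝ) < 1 - 2 * x)
  unfold scA; positivity

lemma scA_tendsto {x : ℝ} (hx : 0 < x) (hx2 : x < 1 / 2) :
    Tendsto (fun n => ∏ k ∈ Finset.range (n + 1), scq x k) atTop (𝓝 (scA x)) := by
  have g3 := Real.Gamma_pos_of_pos (by linarith : (0:ℝ) < 1 + x)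
  have g4 := Real.Gamma_pos_of_pos (by linarith : (0:ℝ) < 1 - 2 * x)
  have T : Tendsto (fun n => Real.GammaSeq (1 - x) n ^ 2 * Real.GammaSeq (1 + 2 * x) n /
      (Real.GammaSeq (1 + x) n ^ 2 * Real.GammaSeq (1 - 2 * x) n)) atTop (𝓝 (scA x)) := by
    exact (((Real.GammaSeq_tendsto_Gamma (1 - x)).pow 2).mul
        (Real.GammaSeq_tendsto_Gamma (1 + 2 * x))).div
      (((Real.GammaSeq_tendsto_Gamma (1 + x)).pow 2).mul
        (Real.GammaSeq_tendsto_Gamma (1 - 2 * x))) (by positivity)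
  apply T.congr'
  filter_upwards [eventually_ge_atTop 1] with n hn
  have hn0 : (0:ℝ) < n := by exact_mod_cast hn
  -- positivity of the partial products
  have hP : ∀ s : ℝ, 0 < s → 0 < ∏ j ∈ Finset.range (n + 1), (s + (j:ℝ)) := by
    intro s hs
    exact Finset.prod_pos fun j _ => by positivity
  have hP1 := hP (1 - x) (by linarith)
  have hP2 := hP (1 + 2 * x) (by linarith)
  have hP3 := hP (1 + x) (by linarith)
  have hP4 := hP (1 - 2 * x) (by linarith)
  have hF : (0:ℝ) < (n.factorial : ℝ) := by exact_mod_cast n.factorial_pos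
  have hA1 : (0:ℝ) < (n:ℝ) ^ (1 - x) := Real.rpow_pos_of_pos hn0 _
  have hA2 : (0:ℝ) < (n:ℝ) ^ (1 + 2 * x) := Real.rpow_pos_of_pos hn0 _
  have hA3 : (0:ℝ) < (n:ℝ) ^ (1 + x) := Real.rpow_pos_of_pos hn0 _
  have hA4 : (0:ℝ) < (n:ℝ) ^ (1 - 2 * x) := Real.rpow_pos_of_pos hn0 _
  have h3 : ∀ a b c : ℝ, (n:ℝ) ^ a * (n:ℝ) ^ b * (n:ℝ) ^ c = (n:ℝ) ^ (a + b + c) := by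
    intro a b c; rw [← Real.rpow_add hn0, ← Real.rpow_add hn0]
  have hA : ((n:ℝ) ^ (1 - x)) ^ 2 * (n:ℝ) ^ (1 + 2 * x)
      = ((n:ℝ) ^ (1 + x)) ^ 2 * (n:ℝ) ^ (1 - 2 * x) := by
    rw [pow_two, pow_two, h3, h3]
    congr 1; ring
  have key8 : ∀ A1 A2 A3 A4 P1 P2 P3 P4 F : ℝ, P1 ≠ 0 → P2 ≠ 0 → P3 ≠ 0 → P4 ≠ 0 → F ≠ 0 →
      A3 ≠ 0 → A4 ≠ 0 →
      (A1 * F / P1) ^ 2 * (A2 * F / P2) / ((A3 * F / P3) ^ 2 * (A4 * F / P4))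
      = A1 ^ 2 * A2 / (A3 ^ 2 * A4) * (P3 ^ 2 * P4 / (P1 ^ 2 * P2)) := by
    intro A1 A2 A3 A4 P1 P2 P3 P4 F h1 h2 h3' h4 h5 h6 h7
    field_simp
  simp only [Real.GammaSeq]
  rw [key8 _ _ _ _ _ _ _ _ _ hP1.ne' hP2.ne' hP3.ne' hP4.ne' hF.ne' hA3.ne' hA4.ne',
    hA, div_self (by positivity), one_mul]
  unfold scq
  rw [Finset.prod_div_distrib, Finset.prod_mul_distrib, Finset.prod_mul_distrib,
    Finset.prod_pow, Finset.prod_pow]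

lemma scA_lt {x y : ℝ} (hy : 0 < y) (hyx : y < x) (hx2 : x < 1 / 2) : scA x < scA y := by
  have hx : 0 < x := hy.trans hyx
  have hy2 : y < 1 / 2 := hyx.trans hx2
  have hr : scq x 0 < scq y 0 := scq_lt hy hyx hx2 0
  have hq0 : 0 < scq x 0 := scq_pos hx hx2 0
  have hAx : 0 < scA x := scA_pos hx hx2
  have key : ∀ n : ℕ, scq y 0 / scq x 0 * ∏ k ∈ Finset.range (n + 1), scq x k ≤
      ∏ k ∈ Finset.range (n + 1), scq y k := by
    intro n
    rw [Finset.prod_range_succ' (scq x), Finset.prod_range_succ' (scq y)]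
    have h1 : ∏ k ∈ Finset.range n, scq x (k + 1) ≤ ∏ k ∈ Finset.range n, scq y (k + 1) :=
      Finset.prod_le_prod (fun k _ => (scq_pos hx hx2 (k + 1)).le)
        (fun k _ => (scq_lt hy hyx hx2 (k + 1)).le)
    have h2 : 0 < scq y 0 := scq_pos hy hy2 0
    calc scq y 0 / scq x 0 * ((∏ k ∈ Finset.range n, scq x (k + 1)) * scq x 0)
        = scq y 0 * ∏ k ∈ Finset.range n, scq x (k + 1) := by
          field_simp
      _ ≤ scq y 0 * ∏ k ∈ Finset.range n, scq y (k + 1) := by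
          exact mul_le_mul_of_nonneg_left h1 h2.le
      _ = (∏ k ∈ Finset.range n, scq y (k + 1)) * scq y 0 := by ring
  have hle : scq y 0 / scq x 0 * scA x ≤ scA y :=
    le_of_tendsto_of_tendsto' ((scA_tendsto hx hx2).const_mul _) (scA_tendsto hy hy2) key
  have : 1 < scq y 0 / scq x 0 := (one_lt_div hq0).2 hr
  nlinarith

/-- The sequence `c_N` is strictly increasing for `N ≥ 3` and tends to `1` as `N → ∞`;
consequently `c_N ≤ 1` for every `N ≥ 3`. -/
theorem schwarzChristoffelConst_strictMono_tendsto_one :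
    (∀ M N : ℕ, 3 ≤ M → M < N → schwarzChristoffelConst M < schwarzChristoffelConst N) ∧
    Tendsto schwarzChristoffelConst atTop (nhds 1) ∧
    (∀ N : ℕ, 3 ≤ N → schwarzChristoffelConst N ≤ 1) := by
  have key : ∀ M N : ℕ, 3 ≤ M → M < N →
      schwarzChristoffelConst M < schwarzChristoffelConst N := by
    intro M N hM hMN
    have hM0 : (0:ℝ) < M := by
      have : 0 < M := lt_of_lt_of_le (by norm_num) hM
      exact_mod_cast this
    have hMN' : (M:ℝ) < N := by exact_mod_cast hMN
    have hM3 : (3:ℝ) ≤ M := by exact_mod_cast hM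
    have hN0 : (0:ℝ) < N := lt_trans hM0 hMN'
    have hy : (0:ℝ) < 1 / N := by positivity
    have hyx : 1 / (N:ℝ) < 1 / M := one_div_lt_one_div_of_lt hM0 hMN'
    have hx2 : 1 / (M:ℝ) < 1 / 2 := by
      rw [div_lt_div_iff₀ hM0 (by norm_num)]
      linarith
    rw [sc_eq, sc_eq]
    exact Real.sqrt_lt_sqrt (scA_pos (hy.trans hyx) hx2).le (scA_lt hy hyx hx2)
  have h0 : Tendsto (fun N : ℕ => 1 / (N:ℝ)) atTop (𝓝 0) :=
    tendsto_one_div_atTop_nhds_zero_nat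
  have h0' : Tendsto (fun N : ℕ => 2 / (N:ℝ)) atTop (𝓝 0) := by
    have := h0.const_mul (2:ℝ)
    simpa [mul_one_div, div_eq_mul_inv] using this
  have hc : ContinuousAt Real.Gamma 1 := by
    refine (Real.differentiableAt_Gamma fun m => ?_).continuousAt
    have h2 : (0:ℝ) ≤ m := m.cast_nonneg
    intro h
    linarith
  have hG1 : Tendsto (fun N : ℕ => Real.Gamma (1 - 1 / (N:ℝ))) atTop (𝓝 1) := by
    have t1 : Tendsto (fun N : ℕ => 1 - 1 / (N:ℝ)) atTop (𝓝 1) := by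
      simpa using tendsto_const_nhds.sub h0
    simpa [Real.Gamma_one, Function.comp_def] using hc.tendsto.comp t1
  have hG2 : Tendsto (fun N : ℕ => Real.Gamma (1 + 2 / (N:ℝ))) atTop (𝓝 1) := by
    have t1 : Tendsto (fun N : ℕ => 1 + 2 / (N:ℝ)) atTop (𝓝 1) := by
      simpa using tendsto_const_nhds.add h0'
    simpa [Real.Gamma_one, Function.comp_def] using hc.tendsto.comp t1
  have hG3 : Tendsto (fun N : ℕ => Real.Gamma (1 + 1 / (N:ℝ))) atTop (𝓝 1) := by
    have t1 : Tendsto (fun N : ℕ => 1 + 1 / (N:ℝ)) atTop (𝓝 1) := by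
      simpa using tendsto_const_nhds.add h0
    simpa [Real.Gamma_one, Function.comp_def] using hc.tendsto.comp t1
  have hG4 : Tendsto (fun N : ℕ => Real.Gamma (1 - 2 / (N:ℝ))) atTop (𝓝 1) := by
    have t1 : Tendsto (fun N : ℕ => 1 - 2 / (N:ℝ)) atTop (𝓝 1) := by
      simpa using tendsto_const_nhds.sub h0'
    simpa [Real.Gamma_one, Function.comp_def] using hc.tendsto.comp t1
  have hA : Tendsto (fun N : ℕ => Real.Gamma (1 - 1 / (N:ℝ)) ^ 2 * Real.Gamma (1 + 2 / (N:ℝ)) /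
      (Real.Gamma (1 + 1 / (N:ℝ)) ^ 2 * Real.Gamma (1 - 2 / (N:ℝ)))) atTop
      (𝓝 (1 ^ 2 * 1 / (1 ^ 2 * 1))) :=
    ((hG1.pow 2).mul hG2).div ((hG3.pow 2).mul hG4) (by norm_num)
  have hlim : Tendsto schwarzChristoffelConst atTop (nhds 1) := by
    have := (Real.continuous_sqrt.tendsto _).comp hA
    show Tendsto (fun N : ℕ => Real.sqrt ((Real.Gamma (1 - 1 / N)) ^ 2 * Real.Gamma (1 + 2 / N) /
      ((Real.Gamma (1 + 1 / N)) ^ 2 * Real.Gamma (1 - 2 / N)))) atTop (nhds 1)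
    simpa [Function.comp_def] using this
  refine ⟨key, hlim, fun N hN => ge_of_tendsto hlim ?_⟩
  filter_upwards [eventually_gt_atTop N] with M hM
  exact (key N M hN hM).le
end

section
/- For every integer k ≥ 1 and every z ∈ ℂ with |z| < 1, the multiple polylogarithm with k indices all equal to 1 satisfies Li_{1,…,1}(z) = (−1)^k (log(1−z))^k / k!, i.e. Σ_{0<n₁<⋯<n_k} z^{n_k}/(n₁ n₂ ⋯ n_k) = (−log(1−z))^k / k!. -/
/-- The multiple polylogarithm `Li_{m₀,…,m_k}(z) = Σ_{0<n₀<⋯<n_k} z^{n_k}/(n₀^{m₀}⋯n_k^{m_k})`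
(with `k + 1` indices). -/
noncomputable def multiPolylog {k : ℕ} (m : Fin (k + 1) → ℕ) (z : ℂ) : ℂ :=
  ∑' n : {n : Fin (k + 1) → ℕ // StrictMono n ∧ 0 < n 0},
    z ^ (n.1 (Fin.last k)) / ∏ i, ((n.1 i : ℂ)) ^ (m i)

open Finset

section helpers

lemma myIic_zero (m : ℕ) : Finset.Iic (0 : Fin (m+1)) = {0} := by
  ext x; simp [Fin.le_zero_iff]

lemma myIic_last (m : ℕ) : Finset.Iic (Fin.last m) = Finset.univ := by
  ext x; simp [Fin.le_last]

lemma myIic_succ {m : ℕ} (i : Fin m) :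
    Finset.Iic i.succ = insert i.succ (Finset.Iic i.castSucc) := by
  ext x
  simp only [Finset.mem_Iic, Finset.mem_insert, Fin.le_def, Fin.ext_iff, Fin.val_succ,
    Fin.coe_castSucc]
  omega

lemma myIci_zero (m : ℕ) : Finset.Ici (0 : Fin (m+1)) = Finset.univ := by
  ext x; simp [Fin.zero_le]

lemma mymap_succ_Ici {m : ℕ} (i : Fin m) :
    (Finset.Ici i).map ⟨Fin.succ, Fin.succ_injective m⟩ = Finset.Ici i.succ := by
  ext x
  simp only [Finset.mem_map, Finset.mem_Ici, Function.Embedding.coeFn_mk]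
  constructor
  · rintro ⟨a, ha, rfl⟩; exact Fin.succ_le_succ_iff.mpr ha
  · intro hx
    have hx0 : x ≠ 0 := by
      rintro rfl
      exact absurd hx (by simp [Fin.le_def])
    obtain ⟨y, rfl⟩ := Fin.exists_succ_eq.mpr hx0
    exact ⟨y, Fin.succ_le_succ_iff.mp hx, rfl⟩

lemma mysum_Ici_succ {m : ℕ} {M : Type*} [AddCommMonoid M] (c : Fin (m+1) → M) (i : Fin m) :
    ∑ j ∈ Finset.Ici i.succ, c j = ∑ j ∈ Finset.Ici i, c j.succ := by
  rw [← mymap_succ_Ici, Finset.sum_map]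
  rfl

lemma mymap_rev_Iic {m : ℕ} (i : Fin m) :
    (Finset.Iic i).map ⟨Fin.rev, Fin.rev_injective⟩ = Finset.Ici i.rev := by
  ext x
  simp only [Finset.mem_map, Finset.mem_Iic, Finset.mem_Ici, Function.Embedding.coeFn_mk]
  constructor
  · rintro ⟨a, ha, rfl⟩; exact Fin.rev_le_rev.mpr ha
  · intro hx
    exact ⟨x.rev, by rwa [← Fin.rev_le_rev, Fin.rev_rev] at hx, Fin.rev_rev x⟩

lemma mysum_Iic_rev {m : ℕ} {M : Type*} [AddCommMonoid M] (c : Fin m → M) (i : Fin m) :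
    ∑ j ∈ Finset.Iic i, c j.rev = ∑ j ∈ Finset.Ici i.rev, c j := by
  rw [← mymap_rev_Iic, Finset.sum_map]
  rfl

lemma sym_suffix : ∀ (m : ℕ) (a : Fin m → ℝ), (∀ i, 0 < a i) →
    ∑ σ : Equiv.Perm (Fin m), ∏ i, (∑ j ∈ Finset.Ici i, a (σ j))⁻¹ = ∏ i, (a i)⁻¹ := by
  intro m
  induction m with
  | zero =>
    intro a ha
    simp
  | succ m ih =>
    intro a ha
    have hS : (0:ℝ) < ∑ j, a j := Finset.sum_pos (fun j _ => ha j) ⟨0, Finset.mem_univ 0⟩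
    rw [← Equiv.sum_comp (Equiv.Perm.decomposeFin).symm
      (fun σ => ∏ i, (∑ j ∈ Finset.Ici i, a (σ j))⁻¹), Fintype.sum_prod_type]
    have step : ∀ (p : Fin (m+1)) (e : Equiv.Perm (Fin m)),
        (∏ i, (∑ j ∈ Finset.Ici i, a (Equiv.Perm.decomposeFin.symm (p, e) j))⁻¹)
        = (∑ j, a j)⁻¹ * ∏ i : Fin m, (∑ j ∈ Finset.Ici i, a (Equiv.swap 0 p (e j).succ))⁻¹ := by
      intro p e
      rw [Fin.prod_univ_succ]
      congr 1
      · rw [myIci_zero]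
        rw [Equiv.sum_comp (Equiv.Perm.decomposeFin.symm (p, e)) a]
      · refine Finset.prod_congr rfl fun i _ => ?_
        rw [mysum_Ici_succ]
        congr 1
        refine Finset.sum_congr rfl fun j _ => ?_
        rw [Equiv.Perm.decomposeFin_symm_apply_succ]
    simp only [step]
    have inner : ∀ p : Fin (m+1),
        ∑ e : Equiv.Perm (Fin m), ∏ i : Fin m,
          (∑ j ∈ Finset.Ici i, a (Equiv.swap 0 p (e j).succ))⁻¹
        = a p * ∏ i, (a i)⁻¹ := by
      intro p
      have hb : ∀ t : Fin m, 0 < a (Equiv.swap 0 p t.succ) := fun t => ha _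
      rw [ih (fun t => a (Equiv.swap 0 p t.succ)) hb]
      have h1 : ∏ i : Fin (m+1), a (Equiv.swap 0 p i) = ∏ i, a i :=
        Equiv.prod_comp (Equiv.swap 0 p) a
      rw [Fin.prod_univ_succ, Equiv.swap_apply_left] at h1
      rw [Finset.prod_inv_distrib, Finset.prod_inv_distrib, ← h1, mul_inv,
        ← mul_assoc, mul_inv_cancel₀ (ne_of_gt (ha p)), one_mul]
    calc ∑ p : Fin (m+1), ∑ e : Equiv.Perm (Fin m),
          (∑ j, a j)⁻¹ * ∏ i : Fin m, (∑ j ∈ Finset.Ici i, a (Equiv.swap 0 p (e j).succ))⁻¹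
        = ∑ p : Fin (m+1), (∑ j, a j)⁻¹ * (a p * ∏ i, (a i)⁻¹) := by
          refine Finset.sum_congr rfl fun p _ => ?_
          rw [← Finset.mul_sum, inner p]
      _ = (∑ j, a j)⁻¹ * (∑ j, a j) * ∏ i, (a i)⁻¹ := by
          rw [← Finset.mul_sum, ← Finset.sum_mul]; ring
      _ = ∏ i, (a i)⁻¹ := by
          rw [inv_mul_cancel₀ (ne_of_gt hS), one_mul]

lemma sym_prefix (m : ℕ) (a : Fin m → ℝ) (ha : ∀ i, 0 < a i) :
    ∑ σ : Equiv.Perm (Fin m), ∏ i, (∑ j ∈ Finset.Iic i, a (σ j))⁻¹ = ∏ i, (a i)⁻¹ := by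
  rw [← sym_suffix m a ha]
  have main : ∀ σ : Equiv.Perm (Fin m),
      ∏ i, (∑ j ∈ Finset.Iic i, a (σ j))⁻¹
        = ∏ i : Fin m, (∑ j ∈ Finset.Ici i, a (σ (Fin.rev j)))⁻¹ := by
    intro σ
    have key : ∀ i : Fin m, (∑ j ∈ Finset.Iic i, a (σ j)) =
        ∑ j ∈ Finset.Ici i.rev, a (σ (Fin.rev j)) := by
      intro i
      have := mysum_Iic_rev (M := ℝ) (fun j => a (σ (Fin.rev j))) i
      rw [← this]
      refine Finset.sum_congr rfl fun j _ => ?_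
      rw [Fin.rev_rev]
    calc ∏ i, (∑ j ∈ Finset.Iic i, a (σ j))⁻¹
        = ∏ i, (∑ j ∈ Finset.Ici i.rev, a (σ (Fin.rev j)))⁻¹ :=
          Finset.prod_congr rfl fun i _ => by rw [key i]
      _ = ∏ i : Fin m, (∑ j ∈ Finset.Ici i, a (σ (Fin.rev j)))⁻¹ :=
          Equiv.prod_comp Fin.revPerm
            (fun i => (∑ j ∈ Finset.Ici i, a (σ (Fin.rev j)))⁻¹)
  rw [Finset.sum_congr rfl fun σ _ => main σ]
  exact Fintype.sum_bijective (fun σ : Equiv.Perm (Fin m) => σ * Fin.revPerm)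
    (Group.mulRight_bijective _) _ _ (fun σ => rfl)

lemma succ_not_mem_Iic_castSucc {m : ℕ} (i : Fin m) : i.succ ∉ Finset.Iic i.castSucc := by
  simp [Fin.le_def]

noncomputable def chainEquiv (k : ℕ) :
    (Fin (k+1) → ℕ) ≃ {n : Fin (k+1) → ℕ // StrictMono n ∧ 0 < n 0} where
  toFun a := ⟨fun i => ∑ j ∈ Finset.Iic i, (a j + 1), by
    constructor
    · rw [Fin.strictMono_iff_lt_succ]
      intro i
      rw [myIic_succ, Finset.sum_insert (succ_not_mem_Iic_castSucc i)]
      omega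
    · show 0 < ∑ j ∈ Finset.Iic (0 : Fin (k+1)), (a j + 1)
      rw [myIic_zero]
      simp⟩
  invFun n i := Fin.cases (n.1 0 - 1) (fun j => n.1 j.succ - n.1 j.castSucc - 1) i
  left_inv a := by
    funext i
    induction i using Fin.cases with
    | zero =>
      show (∑ j ∈ Finset.Iic (0 : Fin (k+1)), (a j + 1)) - 1 = a 0
      rw [myIic_zero]; simp
    | succ j =>
      show (∑ j' ∈ Finset.Iic j.succ, (a j' + 1)) - (∑ j' ∈ Finset.Iic j.castSucc, (a j' + 1))
          - 1 = a j.succ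
      rw [myIic_succ, Finset.sum_insert (succ_not_mem_Iic_castSucc j)]
      omega
  right_inv n := by
    obtain ⟨n, hmono, hpos⟩ := n
    ext i
    show ∑ j ∈ Finset.Iic i,
        ((Fin.cases (n 0 - 1) (fun j => n j.succ - n j.castSucc - 1) j : ℕ) + 1) = n i
    induction i using Fin.induction with
    | zero => rw [myIic_zero]; simp; omega
    | succ j ih =>
      rw [myIic_succ, Finset.sum_insert (succ_not_mem_Iic_castSucc j), ih]
      have := hmono (Fin.castSucc_lt_succ : j.castSucc < j.succ)
      simp only [Fin.cases_succ]
      omega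

lemma summable_pi_prod {g : ℕ → ℝ} (hg : Summable g) (hg0 : ∀ n, 0 ≤ g n) :
    ∀ m : ℕ, Summable (fun a : Fin m → ℕ => ∏ i, g (a i)) := by
  intro m
  induction m with
  | zero => exact .of_finite
  | succ m ih =>
    have h := hg.mul_of_nonneg ih hg0
      (fun a => Finset.prod_nonneg fun i _ => hg0 _)
    rw [← (Fin.consEquiv (fun _ : Fin (m+1) => ℕ)).summable_iff]
    refine h.congr fun p => ?_
    simp [Fin.consEquiv_apply, Fin.prod_univ_succ]

lemma tsum_pi_prod {f : ℕ → ℂ} (hf : Summable (fun n => ‖f n‖)) :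
    ∀ m : ℕ, ∑' a : Fin m → ℕ, ∏ i, f (a i) = (∑' n, f n) ^ m := by
  intro m
  induction m with
  | zero =>
    rw [pow_zero,
      tsum_eq_single (fun _ => 0) (by intro b hb; exact absurd (funext fun i => i.elim0) hb)]
    simp
  | succ m ih =>
    have hnorm : Summable (fun a : Fin m → ℕ => ‖∏ i, f (a i)‖) := by
      refine (summable_pi_prod hf (fun n => norm_nonneg _) m).congr fun a => ?_
      rw [norm_prod]
    rw [← (Fin.consEquiv (fun _ : Fin (m+1) => ℕ)).tsum_eq]
    have heq : ∀ p : ℕ × (Fin m → ℕ),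
        (∏ i, f ((Fin.consEquiv (fun _ : Fin (m+1) => ℕ)) p i)) = f p.1 * ∏ i, f (p.2 i) := by
      intro p
      simp [Fin.consEquiv_apply, Fin.prod_univ_succ]
    rw [tsum_congr heq, ← tsum_mul_tsum_of_summable_norm hf hnorm, ih, pow_succ]
    ring

end helpers

/-- For every `k ≥ 1` (here the number of indices is `k + 1 ≥ 1`) and `|z| < 1`, the multiple
polylogarithm with all indices equal to `1` satisfies
`Li_{1,…,1}(z) = (−1)^{k+1}·(log(1−z))^{k+1}/(k+1)! = (−log(1−z))^{k+1}/(k+1)!`. -/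
theorem multiPolylog_ones_eq (k : ℕ) (z : ℂ) (hz : ‖z‖ < 1) :
    multiPolylog (fun _ : Fin (k + 1) => 1) z =
      (-1 : ℂ) ^ (k + 1) * (Complex.log (1 - z)) ^ (k + 1) / (Nat.factorial (k + 1)) ∧
    multiPolylog (fun _ : Fin (k + 1) => 1) z =
      (-(Complex.log (1 - z))) ^ (k + 1) / (Nat.factorial (k + 1)) := by
  -- basic families
  set F : ℕ → ℂ := fun b => z ^ (b+1) * (((b+1 : ℕ) : ℂ))⁻¹ with hF_def
  set G : ℕ → ℝ := fun b => ‖z‖ ^ (b+1) with hG_def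
  set W : (Fin (k+1) → ℕ) → ℂ := fun a =>
    (∏ i, z ^ (a i + 1)) * (∏ i, (((∑ j ∈ Finset.Iic i, (a j + 1)) : ℕ) : ℂ))⁻¹ with hW_def
  have hG : Summable G := by
    refine ((summable_geometric_of_lt_one (norm_nonneg z) hz).mul_right ‖z‖).congr fun b => ?_
    rw [hG_def, ← pow_succ]
  have hG0 : ∀ b, 0 ≤ G b := fun b => pow_nonneg (norm_nonneg z) _
  have hFnorm : Summable (fun b => ‖F b‖) := by
    refine Summable.of_nonneg_of_le (fun b => norm_nonneg _) (fun b => ?_) hG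
    rw [hF_def]
    simp only [norm_mul, norm_pow, norm_inv, Complex.norm_natCast]
    calc ‖z‖ ^ (b+1) * (((b+1:ℕ):ℝ))⁻¹ ≤ ‖z‖ ^ (b+1) * 1 := by
          refine mul_le_mul_of_nonneg_left ?_ (pow_nonneg (norm_nonneg z) _)
          rw [inv_le_one_iff₀]
          right
          exact_mod_cast Nat.one_le_iff_ne_zero.mpr (Nat.succ_ne_zero b)
      _ = G b := by rw [mul_one]
  have hL : ∑' b, F b = -Complex.log (1 - z) := by
    have hs := Complex.hasSum_taylorSeries_neg_log hz
    have h0 := Summable.tsum_eq_zero_add hs.summable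
    rw [hs.tsum_eq] at h0
    simp only [pow_zero, Nat.cast_zero, div_zero, zero_add] at h0
    rw [h0]
    refine tsum_congr fun b => ?_
    rw [hF_def, div_eq_mul_inv]
  -- summability of W
  have hNat : ∀ (a : Fin (k+1) → ℕ), 0 < ∏ i, (∑ j ∈ Finset.Iic i, (a j + 1)) := by
    intro a
    refine Finset.prod_pos fun i _ => Finset.sum_pos (fun j _ => Nat.succ_pos _)
      ⟨i, Finset.mem_Iic.mpr le_rfl⟩
  have hWnorm : ∀ a, ‖W a‖ ≤ ∏ i, G (a i) := by
    intro a
    rw [hW_def]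
    simp only
    rw [← Nat.cast_prod, norm_mul, norm_inv, Complex.norm_natCast, norm_prod]
    simp only [norm_pow]
    calc (∏ i, ‖z‖ ^ (a i + 1)) * (((∏ i, ∑ j ∈ Finset.Iic i, (a j + 1) : ℕ) : ℝ))⁻¹
        ≤ (∏ i, ‖z‖ ^ (a i + 1)) * 1 := by
          refine mul_le_mul_of_nonneg_left ?_
            (Finset.prod_nonneg fun i _ => pow_nonneg (norm_nonneg z) _)
          rw [inv_le_one_iff₀]
          right
          exact_mod_cast Nat.one_le_iff_ne_zero.mpr (Nat.pos_iff_ne_zero.mp (hNat a))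
      _ = ∏ i, G (a i) := by rw [mul_one]
  have hW : Summable W :=
    Summable.of_norm_bounded (summable_pi_prod hG hG0 (k+1)) hWnorm
  -- Step 1 : multiPolylog = ∑' a, W a
  have step1 : multiPolylog (fun _ : Fin (k + 1) => 1) z = ∑' a, W a := by
    rw [multiPolylog, ← (chainEquiv k).tsum_eq]
    refine tsum_congr fun a => ?_
    show z ^ (∑ j ∈ Finset.Iic (Fin.last k), (a j + 1)) /
        ∏ i, (((∑ j ∈ Finset.Iic i, (a j + 1) : ℕ)) : ℂ) ^ (1:ℕ) = W a
    rw [hW_def]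
    simp only [pow_one, myIic_last]
    rw [← Finset.prod_pow_eq_pow_sum, div_eq_mul_inv]
  -- permutation invariance
  have hperm : ∀ σ : Equiv.Perm (Fin (k+1)),
      ∑' a : Fin (k+1) → ℕ, W (fun i => a (σ i)) = ∑' a, W a := by
    intro σ
    have := (Equiv.arrowCongr σ.symm (Equiv.refl ℕ)).tsum_eq W
    refine Eq.trans ?_ this
    exact tsum_congr fun a => rfl
  have hpermsum : ∀ σ : Equiv.Perm (Fin (k+1)),
      Summable (fun a : Fin (k+1) → ℕ => W (fun i => a (σ i))) := by
    intro σ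
    have := ((Equiv.arrowCongr σ.symm (Equiv.refl ℕ)).summable_iff (f := W)).mpr hW
    exact this.congr fun a => rfl
  -- fiberwise symmetrization
  have keyfiber : ∀ a : Fin (k+1) → ℕ,
      ∑ σ : Equiv.Perm (Fin (k+1)), W (fun i => a (σ i)) = ∏ i, F (a i) := by
    intro a
    have hsymR := sym_prefix (k+1) (fun i => (a i : ℝ) + 1) (fun i => by positivity)
    have hsymC : ∑ σ : Equiv.Perm (Fin (k+1)),
        (∏ i, (((∑ j ∈ Finset.Iic i, (a (σ j) + 1) : ℕ)) : ℂ))⁻¹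
        = ∏ i, (((a i + 1 : ℕ)) : ℂ)⁻¹ := by
      have := congrArg (fun r : ℝ => (r : ℂ)) hsymR
      push_cast at this ⊢
      rw [← this]
      congr 1
      ext σ
      rw [← Finset.prod_inv_distrib]
    calc ∑ σ : Equiv.Perm (Fin (k+1)), W (fun i => a (σ i))
        = ∑ σ : Equiv.Perm (Fin (k+1)), (∏ i, z ^ (a i + 1)) *
            (∏ i, (((∑ j ∈ Finset.Iic i, (a (σ j) + 1) : ℕ)) : ℂ))⁻¹ := by
          refine Finset.sum_congr rfl fun σ _ => ?_
          rw [hW_def]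
          simp only
          rw [Equiv.prod_comp σ (fun i => z ^ (a i + 1))]
      _ = (∏ i, z ^ (a i + 1)) * ∏ i, (((a i + 1 : ℕ)) : ℂ)⁻¹ := by
          rw [← Finset.mul_sum, hsymC]
      _ = ∏ i, F (a i) := by
          rw [hF_def, ← Finset.prod_mul_distrib]
  -- put it together
  have main : ((Nat.factorial (k+1) : ℂ)) * multiPolylog (fun _ : Fin (k + 1) => 1) z
      = (-(Complex.log (1 - z))) ^ (k + 1) := by
    calc ((Nat.factorial (k+1) : ℂ)) * multiPolylog (fun _ : Fin (k + 1) => 1) z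
        = ∑ _σ : Equiv.Perm (Fin (k+1)), multiPolylog (fun _ : Fin (k + 1) => 1) z := by
          rw [Finset.sum_const, nsmul_eq_mul]
          congr 2
          rw [Finset.card_univ, Fintype.card_perm, Fintype.card_fin]
      _ = ∑ σ : Equiv.Perm (Fin (k+1)), ∑' a : Fin (k+1) → ℕ, W (fun i => a (σ i)) := by
          refine Finset.sum_congr rfl fun σ _ => ?_
          rw [step1, hperm σ]
      _ = ∑' a : Fin (k+1) → ℕ, ∑ σ : Equiv.Perm (Fin (k+1)), W (fun i => a (σ i)) :=
          (Summable.tsum_finsetSum fun σ _ => hpermsum σ).symm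
      _ = ∑' a : Fin (k+1) → ℕ, ∏ i, F (a i) := tsum_congr keyfiber
      _ = (∑' b, F b) ^ (k+1) := tsum_pi_prod hFnorm (k+1)
      _ = (-(Complex.log (1 - z))) ^ (k + 1) := by rw [hL]
  have hfac : ((Nat.factorial (k+1) : ℂ)) ≠ 0 := by
    exact_mod_cast (Nat.factorial_pos (k+1)).ne'
  have second : multiPolylog (fun _ : Fin (k + 1) => 1) z =
      (-(Complex.log (1 - z))) ^ (k + 1) / (Nat.factorial (k + 1)) := by
    field_simp
    rw [mul_comm]
    exact main
  refine ⟨?_, second⟩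
  rw [second, neg_pow]
end

section
/- Let z ∈ ℂ and 0 < b < 1, and assume there is C < 1 such that |1 − tz| ≤ C for all t ∈ [b, 1]. Let θ = arctan(π/|log C|). If m ≥ 1 is an integer with m·θ ≤ π/2, then the real part of (log(1−tz))^m does not change sign as t ranges over [b,1] (i.e. it is either ≥ 0 for all t ∈ [b,1] or ≤ 0 for all t ∈ [b,1]), and likewise the imaginary part of (log(1−tz))^m does not change sign on [b,1]. -/
open Real

lemma key_lemma (w : ℂ) (L θ : ℝ) (hL : L < 0) (hx : w.re ≤ L)
    (hy : 0 ≤ w.im) (hyπ : w.im ≤ π)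
    (hθ : Real.arctan (π / (-L)) ≤ θ) (m : ℕ)
    (hmθ : (m : ℝ) * θ ≤ π / 2) :
    0 ≤ (-1 : ℝ) ^ m * (w ^ m).re ∧ (-1 : ℝ) ^ m * (w ^ m).im ≤ 0 := by
  have hxneg : w.re < 0 := lt_of_le_of_lt hx hL
  set α := Complex.arg w with hα
  have hαle : α ≤ π := Complex.arg_le_pi w
  have hα2 : π / 2 < α := by
    rcases lt_or_ge (π/2) α with h | h
    · exact h
    rcases lt_or_eq_of_le h with h | h
    · exfalso
      rcases Complex.arg_lt_pi_div_two_iff.mp h with h1 | h1 | h1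
      · linarith
      · linarith
      · simp [h1] at hxneg
    · exfalso
      have h2 : w.arg = π / 2 := h
      have := (Complex.arg_eq_pi_div_two_iff.mp h2).1
      linarith
  set γ := π - α with hγ
  have hγ0 : 0 ≤ γ := by simp only [hγ]; linarith
  have hγlt : γ < π / 2 := by simp only [hγ]; linarith
  have htanγ : Real.tan γ = w.im / (-w.re) := by
    rw [hγ, Real.tan_pi_sub, hα, Complex.tan_arg]; ring
  have hγθ : γ ≤ θ := by
    have h1 : γ = Real.arctan (Real.tan γ) := (Real.arctan_tan (by linarith) hγlt).symm
    rw [h1, htanγ]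
    refine le_trans (Real.arctan_strictMono.monotone ?_) hθ
    calc w.im / (-w.re) ≤ π / (-w.re) := by
          apply div_le_div_of_nonneg_right hyπ (by linarith)
      _ ≤ π / (-L) := by
          apply div_le_div_of_nonneg_left pi_pos.le (by linarith) (by linarith)
  have hpolar : w ^ m = ((‖w‖ ^ m * Real.cos (m * α) : ℝ) : ℂ)
      + ((‖w‖ ^ m * Real.sin (m * α) : ℝ) : ℂ) * Complex.I := by
    conv_lhs => rw [← Complex.norm_mul_exp_arg_mul_I w]
    rw [mul_pow, ← Complex.exp_nat_mul, ← hα]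
    have : (m : ℂ) * ((α : ℂ) * Complex.I) = ((m * α : ℝ) : ℂ) * Complex.I := by
      push_cast; ring
    rw [this, Complex.exp_mul_I, ← Complex.ofReal_cos, ← Complex.ofReal_sin]
    push_cast
    ring
  have hre : (w ^ m).re = ‖w‖ ^ m * Real.cos (m * α) := by
    rw [hpolar]
    simp only [Complex.add_re, Complex.mul_re, Complex.I_re, Complex.I_im,
      Complex.ofReal_re, Complex.ofReal_im]
    ring
  have him : (w ^ m).im = ‖w‖ ^ m * Real.sin (m * α) := by
    rw [hpolar]
    simp only [Complex.add_im, Complex.mul_im, Complex.I_re, Complex.I_im,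
      Complex.ofReal_re, Complex.ofReal_im]
    ring
  set β := (m : ℝ) * γ with hβ
  have hβ0 : 0 ≤ β := mul_nonneg (Nat.cast_nonneg m) hγ0
  have hβle : β ≤ π / 2 := by
    have hθ0 : 0 ≤ θ := le_trans (le_trans hγ0 hγθ) le_rfl
    calc β ≤ (m : ℝ) * θ := mul_le_mul_of_nonneg_left hγθ (Nat.cast_nonneg m)
      _ ≤ π / 2 := hmθ
  have hmα : (m : ℝ) * α = m * π - β := by rw [hβ, hγ]; ring
  have hcos : Real.cos ((m : ℝ) * α) = (-1 : ℝ) ^ m * Real.cos β := by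
    rw [hmα, Real.cos_nat_mul_pi_sub]
  have hsin : Real.sin ((m : ℝ) * α) = -((-1 : ℝ) ^ m * Real.sin β) := by
    rw [hmα, Real.sin_nat_mul_pi_sub]
  have hsq : (-1 : ℝ) ^ m * (-1 : ℝ) ^ m = 1 := by
    rw [← pow_add]; exact (neg_one_pow_eq_one_iff_even (by norm_num)).mpr (Even.add_self m)
  have hcosβ : 0 ≤ Real.cos β := Real.cos_nonneg_of_mem_Icc ⟨by linarith, hβle⟩
  have hsinβ : 0 ≤ Real.sin β := Real.sin_nonneg_of_nonneg_of_le_pi hβ0 (by linarith [pi_pos])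
  have habs : (0:ℝ) ≤ ‖w‖ ^ m := pow_nonneg (norm_nonneg w) m
  constructor
  · rw [hre, hcos]
    calc (0:ℝ) ≤ ‖w‖ ^ m * Real.cos β := mul_nonneg habs hcosβ
      _ = (-1:ℝ)^m * (‖w‖ ^ m * ((-1:ℝ)^m * Real.cos β)) := by
          rw [show (-1:ℝ)^m * (‖w‖ ^ m * ((-1:ℝ)^m * Real.cos β))
            = ((-1:ℝ)^m * (-1:ℝ)^m) * (‖w‖ ^ m * Real.cos β) by ring, hsq, one_mul]
  · rw [him, hsin]
    calc (-1:ℝ)^m * (‖w‖ ^ m * -((-1:ℝ)^m * Real.sin β))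
        = -(((-1:ℝ)^m * (-1:ℝ)^m) * (‖w‖ ^ m * Real.sin β)) := by ring
      _ = -(‖w‖ ^ m * Real.sin β) := by rw [hsq, one_mul]
      _ ≤ 0 := neg_nonpos.mpr (mul_nonneg habs hsinβ)

lemma helper_lemma (z : ℂ) (b C : ℝ) (hb0 : 0 < b) (hC : C < 1)
    (hbound : ∀ t ∈ Set.Icc b 1, ‖1 - (t : ℂ) * z‖ ≤ C)
    (m : ℕ) (hm : 1 ≤ m)
    (hθ : (m : ℝ) * Real.arctan (π / |Real.log C|) ≤ π / 2)
    (t : ℝ) (ht : t ∈ Set.Icc b 1) :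
    0 ≤ (-1:ℝ)^m * ((Complex.log (1 - (t:ℂ)*z)) ^ m).re ∧
    (0 ≤ (1 - (t:ℂ)*z).im → (-1:ℝ)^m * ((Complex.log (1 - (t:ℂ)*z)) ^ m).im ≤ 0) ∧
    ((1 - (t:ℂ)*z).im < 0 → 0 ≤ (-1:ℝ)^m * ((Complex.log (1 - (t:ℂ)*z)) ^ m).im) := by
  set u : ℂ := 1 - (t:ℂ)*z with hu_def
  by_cases hu : u = 0
  · have hm0 : m ≠ 0 := Nat.one_le_iff_ne_zero.mp hm
    rw [hu]
    simp [Complex.log_zero, zero_pow hm0]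
  · have habs : 0 < ‖u‖ := norm_pos_iff.mpr hu
    have hnorm : ‖u‖ ≤ C := by
      have := hbound t ht
      rwa [hu_def]
    have hC0 : 0 < C := lt_of_lt_of_le habs hnorm
    have hL : Real.log C < 0 := Real.log_neg hC0 hC
    have hθ' : (m:ℝ) * Real.arctan (π / (-(Real.log C))) ≤ π/2 := by
      rwa [abs_of_neg hL] at hθ
    have hx : (Complex.log u).re ≤ Real.log C := by
      rw [Complex.log_re]; exact Real.log_le_log habs hnorm
    rcases le_or_gt 0 u.im with him | him
    · have hyarg : 0 ≤ (Complex.log u).im := by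
        rw [Complex.log_im]; exact Complex.arg_nonneg_iff.mpr him
      have hyπ : (Complex.log u).im ≤ π := by
        rw [Complex.log_im]; exact Complex.arg_le_pi u
      have h := key_lemma (Complex.log u) (Real.log C) (Real.arctan (π / (-(Real.log C))))
        hL hx hyarg hyπ le_rfl m hθ'
      exact ⟨h.1, fun _ => h.2, fun h' => absurd him (not_le.mpr h')⟩
    · set w := Complex.log u with hw
      set w' := (starRingEnd ℂ) w with hw'
      have h1 : w'.re = w.re := Complex.conj_re w
      have h2 : w'.im = -w.im := Complex.conj_im w
      have hwim : w.im < 0 := by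
        rw [hw, Complex.log_im]; exact Complex.arg_neg_iff.mpr him
      have hwim2 : -π < w.im := by
        rw [hw, Complex.log_im]; exact Complex.neg_pi_lt_arg u
      have h := key_lemma w' (Real.log C) (Real.arctan (π / (-(Real.log C))))
        hL (by rw [h1]; exact hx) (by rw [h2]; linarith) (by rw [h2]; linarith)
        le_rfl m hθ'
      have hconj : w' ^ m = (starRingEnd ℂ) (w ^ m) := (map_pow (starRingEnd ℂ) w m).symm
      have hre : (w' ^ m).re = (w ^ m).re := by rw [hconj]; exact Complex.conj_re _
      have him' : (w' ^ m).im = -((w ^ m).im) := by rw [hconj]; exact Complex.conj_im _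
      refine ⟨by rw [← hre]; exact h.1, fun h' => absurd h' (not_le.mpr him), fun _ => ?_⟩
      have h3 := h.2
      rw [him'] at h3
      nlinarith [h3]

/-- Let `z ∈ ℂ`, `0 < b < 1`, and suppose `|1 − tz| ≤ C < 1` for all `t ∈ [b,1]`. Set
`θ = arctan(π/|log C|)`. If `m ≥ 1` is an integer with `m·θ ≤ π/2`, then the real and
imaginary parts of `(log(1−tz))^m` do not change sign as `t` ranges over `[b,1]`. -/
theorem log_pow_re_im_sign_const (z : ℂ) (b C : ℝ) (hb0 : 0 < b) (hb1 : b < 1)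
    (hC : C < 1) (hbound : ∀ t ∈ Set.Icc b 1, ‖1 - (t : ℂ) * z‖ ≤ C)
    (m : ℕ) (hm : 1 ≤ m)
    (hθ : (m : ℝ) * Real.arctan (π / |Real.log C|) ≤ π / 2) :
    ((∀ t ∈ Set.Icc b 1, 0 ≤ ((Complex.log (1 - (t : ℂ) * z)) ^ m).re) ∨
      (∀ t ∈ Set.Icc b 1, ((Complex.log (1 - (t : ℂ) * z)) ^ m).re ≤ 0)) ∧
    ((∀ t ∈ Set.Icc b 1, 0 ≤ ((Complex.log (1 - (t : ℂ) * z)) ^ m).im) ∨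
      (∀ t ∈ Set.Icc b 1, ((Complex.log (1 - (t : ℂ) * z)) ^ m).im ≤ 0)) := by
  have H := fun t ht => helper_lemma z b C hb0 hC hbound m hm hθ t ht
  have himc : ∀ (t : ℝ), (1 - (t:ℂ)*z).im = -(t * z.im) := by
    intro t; simp [Complex.sub_im, Complex.mul_im]
  constructor
  · rcases Nat.even_or_odd m with hp | hp
    · left; intro t ht
      have := (H t ht).1
      rw [hp.neg_one_pow, one_mul] at this; exact this
    · right; intro t ht
      have := (H t ht).1
      rw [hp.neg_one_pow] at this; linarith
  · rcases le_or_gt z.im 0 with hz | hz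
    · have key : ∀ t ∈ Set.Icc b 1, (-1:ℝ)^m * ((Complex.log (1 - (t:ℂ)*z)) ^ m).im ≤ 0 := by
        intro t ht
        refine (H t ht).2.1 ?_
        rw [himc]
        have htpos : 0 < t := lt_of_lt_of_le hb0 ht.1
        nlinarith
      rcases Nat.even_or_odd m with hp | hp
      · right; intro t ht
        have := key t ht
        rw [hp.neg_one_pow, one_mul] at this; exact this
      · left; intro t ht
        have := key t ht
        rw [hp.neg_one_pow] at this; linarith
    · have key : ∀ t ∈ Set.Icc b 1, 0 ≤ (-1:ℝ)^m * ((Complex.log (1 - (t:ℂ)*z)) ^ m).im := by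
        intro t ht
        refine (H t ht).2.2 ?_
        rw [himc]
        have htpos : 0 < t := lt_of_lt_of_le hb0 ht.1
        nlinarith
      rcases Nat.even_or_odd m with hp | hp
      · left; intro t ht
        have := key t ht
        rw [hp.neg_one_pow, one_mul] at this; exact this
      · right; intro t ht
        have := key t ht
        rw [hp.neg_one_pow] at this; linarith
end

section
/- Let N₀ > 0 be real, let z ∈ ℂ, ν ∈ [0, 1/N₀] and 0 < b < 1, and assume there is C < 1 such that |1 − tz| ≤ C for all t ∈ [b, 1]. Let θ = arctan(π/|log C|). If m ≥ 1 is an integer with m·θ + 2π/N₀ ≤ π/2, then the real part of (log(1−tz))^m · (1−tz)^{−2ν} does not change sign as t ranges over [b,1] (it is either ≥ 0 for all such t or ≤ 0 for all such t), and likewise its imaginary part does not change sign on [b,1]. -/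
open Real

lemma core_polar (C ν : ℝ) (hC : C < 1) (hν0 : 0 ≤ ν) (m : ℕ) (w : ℂ) (hw : w ≠ 0)
    (hwC : ‖w‖ ≤ C) :
    ∃ A φ : ℝ, 0 ≤ A ∧
      |φ| ≤ (m : ℝ) * Real.arctan (π / |Real.log C|) + 2 * ν * π ∧
      (0 ≤ w.arg → φ ≤ 0) ∧ (w.arg ≤ 0 → 0 ≤ φ) ∧
      Complex.log w ^ m * w ^ ((-(2*ν):ℝ):ℂ)
        = (((-1)^m * A : ℝ) : ℂ) * Complex.exp ((φ : ℂ) * Complex.I) := by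
  have hw0 : 0 < ‖w‖ := norm_pos_iff.2 hw
  have hC0 : 0 < C := lt_of_lt_of_le hw0 hwC
  set x : ℝ := Real.log ‖w‖ with hxdef
  set y : ℝ := w.arg with hydef
  have hx : x < 0 := Real.log_neg hw0 (lt_of_le_of_lt hwC hC)
  have hxC : x ≤ Real.log C := Real.log_le_log hw0 hwC
  have hClog : Real.log C < 0 := Real.log_neg hC0 hC
  have hy : |y| ≤ π := Complex.abs_arg_le_pi w
  have hLre : (Complex.log w).re = x := Complex.log_re w
  have hLim : (Complex.log w).im = y := Complex.log_im w
  set u : ℝ := y / x with hudef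
  set α : ℝ := Real.arctan u with hadef
  set s : ℝ := (-x) * Real.sqrt (1 + u^2) with hsdef
  have hsq : 0 < Real.sqrt (1 + u^2) := Real.sqrt_pos.2 (by positivity)
  have hs0 : 0 < s := mul_pos (by linarith) hsq
  have hL : Complex.log w = -((s:ℂ) * Complex.exp ((α:ℂ) * Complex.I)) := by
    apply Complex.ext
    · simp only [Complex.neg_re, Complex.mul_re, Complex.ofReal_re, Complex.ofReal_im,
        Complex.exp_ofReal_mul_I_re, Complex.exp_ofReal_mul_I_im, hLre]
      rw [hadef, Real.cos_arctan]
      field_simp [hsdef]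
      rw [hsdef]; ring
    · simp only [Complex.neg_im, Complex.mul_im, Complex.ofReal_re, Complex.ofReal_im,
        Complex.exp_ofReal_mul_I_re, Complex.exp_ofReal_mul_I_im, hLim]
      rw [hadef, Real.sin_arctan]
      have hxu : x * u = y := by rw [hudef]; field_simp; exact mul_div_cancel_left₀ y hx.ne
      have h1 : s * (u / Real.sqrt (1 + u^2)) = -(x*u) := by
        rw [hsdef]; field_simp
      rw [h1, hxu]
      ring
  have hmono := Real.arctan_strictMono.monotone
  refine ⟨s ^ m * Real.exp (-(2*ν)*x), (m : ℝ) * α - 2*ν*y, by positivity, ?_, ?_, ?_, ?_⟩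
  · have huv : |u| ≤ π / |Real.log C| := by
      rw [hudef, abs_div]
      apply div_le_div₀ Real.pi_pos.le hy (abs_pos.2 hClog.ne)
      rw [abs_of_neg hClog, abs_of_neg hx]; linarith
    have hα : |α| ≤ Real.arctan (π / |Real.log C|) := by
      rw [abs_le]
      constructor
      · rw [← Real.arctan_neg]
        exact hmono (by cases abs_le.1 (le_refl |u|) with | intro h1 h2 => linarith)
      · exact hmono (le_of_abs_le huv)
    calc |(m:ℝ) * α - 2*ν*y| ≤ |(m:ℝ) * α| + |2*ν*y| := abs_sub _ _
      _ ≤ (m:ℝ) * Real.arctan (π / |Real.log C|) + 2*ν*π := by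
          rw [abs_mul, abs_mul, abs_mul, Nat.abs_cast, abs_of_nonneg (by norm_num : (0:ℝ) ≤ 2),
            abs_of_nonneg hν0]
          have h1 : (m:ℝ) * |α| ≤ (m:ℝ) * Real.arctan (π / |Real.log C|) :=
            mul_le_mul_of_nonneg_left hα (Nat.cast_nonneg m)
          have h2 : 2 * ν * |y| ≤ 2 * ν * π := mul_le_mul_of_nonneg_left hy (by positivity)
          linarith
  · intro hy0
    have hu : u ≤ 0 := div_nonpos_iff.2 (Or.inl ⟨hy0, hx.le⟩)
    have hα : α ≤ 0 := by
      have := hmono hu; rw [Real.arctan_zero] at this; exact this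
    have : 0 ≤ 2*ν*y := by positivity
    nlinarith [Nat.cast_nonneg (α := ℝ) m]
  · intro hy0
    have hu : 0 ≤ u := div_nonneg_iff.2 (Or.inr ⟨hy0, hx.le⟩)
    have hα : 0 ≤ α := by
      have := hmono hu; rw [Real.arctan_zero] at this; exact this
    have : 2*ν*y ≤ 0 := mul_nonpos_of_nonneg_of_nonpos (by positivity) hy0
    nlinarith [Nat.cast_nonneg (α := ℝ) m]
  · rw [hL, Complex.cpow_def_of_ne_zero hw]
    rw [neg_pow, mul_pow, ← Complex.exp_nat_mul]
    have hlog : Complex.log w * ((-(2*ν):ℝ):ℂ)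
        = ((-(2*ν)*x : ℝ) : ℂ) + ((-(2*ν)*y : ℝ):ℂ) * Complex.I := by
      rw [Complex.ext_iff]
      constructor <;>
        simp [Complex.mul_re, Complex.mul_im, hLre, hLim] <;> ring
    rw [hlog, Complex.exp_add]
    have hexp : Complex.exp ((m:ℂ)*((α:ℂ)*Complex.I)) * Complex.exp (((-(2*ν)*y : ℝ):ℂ)*Complex.I)
        = Complex.exp ((((m:ℝ)*α - 2*ν*y : ℝ):ℂ) * Complex.I) := by
      rw [← Complex.exp_add]; congr 1; push_cast; ring
    rw [show ((((-1:ℝ))^m * (s^m * rexp (-(2*ν)*x)) : ℝ) : ℂ)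
        = (-1)^m * (s:ℂ)^m * Complex.exp (((-(2*ν)*x : ℝ):ℂ)) by
      push_cast [Complex.ofReal_exp]; ring, ← hexp]
    ring

lemma prod_zero (m : ℕ) (hm : 1 ≤ m) (c : ℂ) :
    Complex.log 0 ^ m * (0:ℂ) ^ c = 0 := by
  rw [Complex.log_zero, zero_pow (by omega : m ≠ 0), zero_mul]


/-- Let `N₀ > 0`, `z ∈ ℂ`, `ν ∈ [0, 1/N₀]`, `0 < b < 1`, and suppose `|1 − tz| ≤ C < 1` for
all `t ∈ [b,1]`. Set `θ = arctan(π/|log C|)`. If `m ≥ 1` is an integer with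
`m·θ + 2π/N₀ ≤ π/2`, then the real and imaginary parts of
`(log(1−tz))^m · (1−tz)^{−2ν}` do not change sign as `t` ranges over `[b,1]`. -/
theorem log_pow_cpow_re_im_sign_const (N₀ : ℝ) (hN₀ : 0 < N₀) (z : ℂ)
    (ν : ℝ) (hν : ν ∈ Set.Icc 0 (1 / N₀)) (b C : ℝ) (hb0 : 0 < b) (hb1 : b < 1)
    (hC : C < 1) (hbound : ∀ t ∈ Set.Icc b 1, ‖1 - (t : ℂ) * z‖ ≤ C)
    (m : ℕ) (hm : 1 ≤ m)
    (hθ : (m : ℝ) * Real.arctan (π / |Real.log C|) + 2 * π / N₀ ≤ π / 2) :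
    ((∀ t ∈ Set.Icc b 1,
        0 ≤ ((Complex.log (1 - (t : ℂ) * z)) ^ m *
              (1 - (t : ℂ) * z) ^ ((-(2 * ν) : ℝ) : ℂ)).re) ∨
      (∀ t ∈ Set.Icc b 1,
        ((Complex.log (1 - (t : ℂ) * z)) ^ m *
          (1 - (t : ℂ) * z) ^ ((-(2 * ν) : ℝ) : ℂ)).re ≤ 0)) ∧
    ((∀ t ∈ Set.Icc b 1,
        0 ≤ ((Complex.log (1 - (t : ℂ) * z)) ^ m *
              (1 - (t : ℂ) * z) ^ ((-(2 * ν) : ℝ) : ℂ)).im) ∨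
      (∀ t ∈ Set.Icc b 1,
        ((Complex.log (1 - (t : ℂ) * z)) ^ m *
          (1 - (t : ℂ) * z) ^ ((-(2 * ν) : ℝ) : ℂ)).im ≤ 0)) := by
  obtain ⟨hν0, hν1⟩ := hν
  have hνπ : 2 * ν * π ≤ 2 * π / N₀ := by
    rw [div_eq_mul_inv]
    have : ν ≤ N₀⁻¹ := by rwa [one_div] at hν1
    nlinarith [Real.pi_pos]
  have hsq1 : ((-1:ℝ)^m) * ((-1:ℝ)^m) = 1 := by
    rcases Nat.even_or_odd m with h | h
    · rw [h.neg_one_pow]; norm_num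
    · rw [h.neg_one_pow]; norm_num
  -- key facts about each point
  have key : ∀ t ∈ Set.Icc b 1, (1 - (t:ℂ)*z) ≠ 0 →
      ∃ A φ : ℝ, 0 ≤ A ∧ |φ| ≤ π/2 ∧
      (0 ≤ (1 - (t:ℂ)*z).arg → φ ≤ 0) ∧ ((1 - (t:ℂ)*z).arg ≤ 0 → 0 ≤ φ) ∧
      ((Complex.log (1 - (t:ℂ)*z)) ^ m * (1 - (t:ℂ)*z) ^ ((-(2*ν):ℝ):ℂ)).re
        = (-1:ℝ)^m * A * Real.cos φ ∧
      ((Complex.log (1 - (t:ℂ)*z)) ^ m * (1 - (t:ℂ)*z) ^ ((-(2*ν):ℝ):ℂ)).im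
        = (-1:ℝ)^m * A * Real.sin φ := by
    intro t ht hw
    obtain ⟨A, φ, hA, hφ, hs1, hs2, heq⟩ :=
      core_polar C ν hC hν0 m (1 - (t:ℂ)*z) hw (hbound t ht)
    set r : ℝ := (-1:ℝ)^m * A with hr
    refine ⟨A, φ, hA, by linarith, hs1, hs2, ?_, ?_⟩
    · rw [heq]
      simp [Complex.mul_re, Complex.ofReal_re, Complex.ofReal_im,
        Complex.exp_ofReal_mul_I_re, Complex.exp_ofReal_mul_I_im]
      exact Or.inl hr
    · rw [heq]
      simp [Complex.mul_im, Complex.ofReal_re, Complex.ofReal_im,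
        Complex.exp_ofReal_mul_I_re, Complex.exp_ofReal_mul_I_im]
      exact Or.inl hr
  have hRe : ∀ t ∈ Set.Icc b 1,
      0 ≤ (-1:ℝ)^m * ((Complex.log (1 - (t:ℂ)*z)) ^ m *
        (1 - (t:ℂ)*z) ^ ((-(2*ν):ℝ):ℂ)).re := by
    intro t ht
    by_cases hw : (1 - (t:ℂ)*z) = 0
    · rw [hw, prod_zero m hm]; simp
    · obtain ⟨A, φ, hA, hφ, _, _, hre, _⟩ := key t ht hw
      rw [hre, ← mul_assoc, ← mul_assoc, hsq1, one_mul]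
      have : 0 ≤ Real.cos φ := Real.cos_nonneg_of_mem_Icc (abs_le.1 hφ |> fun h => ⟨h.1, h.2⟩)
      positivity
  have hImP : ∀ t ∈ Set.Icc b 1, 0 ≤ (1 - (t:ℂ)*z).im →
      (-1:ℝ)^m * ((Complex.log (1 - (t:ℂ)*z)) ^ m *
        (1 - (t:ℂ)*z) ^ ((-(2*ν):ℝ):ℂ)).im ≤ 0 := by
    intro t ht him
    by_cases hw : (1 - (t:ℂ)*z) = 0
    · rw [hw, prod_zero m hm]; simp
    · obtain ⟨A, φ, hA, hφ, hs1, _, _, him'⟩ := key t ht hw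
      have hφ0 : φ ≤ 0 := hs1 (Complex.arg_nonneg_iff.2 him)
      have hsin : Real.sin φ ≤ 0 := by
        have h := Real.sin_nonneg_of_nonneg_of_le_pi (x := -φ) (by linarith)
          (by cases abs_le.1 hφ with | intro h1 h2 => linarith [Real.pi_pos])
        rw [Real.sin_neg] at h; linarith
      rw [him', ← mul_assoc, ← mul_assoc, hsq1, one_mul]
      exact mul_nonpos_of_nonneg_of_nonpos hA hsin
  have hImN : ∀ t ∈ Set.Icc b 1, (1 - (t:ℂ)*z).im < 0 →
      0 ≤ (-1:ℝ)^m * ((Complex.log (1 - (t:ℂ)*z)) ^ m *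
        (1 - (t:ℂ)*z) ^ ((-(2*ν):ℝ):ℂ)).im := by
    intro t ht him
    have hw : (1 - (t:ℂ)*z) ≠ 0 := by
      intro h; rw [h] at him; simp at him
    obtain ⟨A, φ, hA, hφ, _, hs2, _, him'⟩ := key t ht hw
    have hφ0 : 0 ≤ φ := hs2 (Complex.arg_neg_iff.2 him).le
    have hsin : 0 ≤ Real.sin φ := Real.sin_nonneg_of_nonneg_of_le_pi hφ0
      (by cases abs_le.1 hφ with | intro h1 h2 => linarith [Real.pi_pos])
    rw [him', ← mul_assoc, ← mul_assoc, hsq1, one_mul]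
    positivity
  have himw : ∀ t : ℝ, (1 - (t:ℂ)*z).im = -(t * z.im) := by
    intro t; simp [Complex.sub_im, Complex.mul_im]
  constructor
  · rcases Nat.even_or_odd m with he | ho
    · left; intro t ht
      have := hRe t ht; rwa [he.neg_one_pow, one_mul] at this
    · right; intro t ht
      have := hRe t ht; rw [ho.neg_one_pow] at this; linarith
  · rcases le_or_gt z.im 0 with hz | hz
    · have him : ∀ t ∈ Set.Icc b 1, 0 ≤ (1 - (t:ℂ)*z).im := by
        intro t ht
        rw [himw t]
        have : t * z.im ≤ 0 := mul_nonpos_of_nonneg_of_nonpos (by linarith [ht.1]) hz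
        linarith
      rcases Nat.even_or_odd m with he | ho
      · right; intro t ht
        have := hImP t ht (him t ht); rwa [he.neg_one_pow, one_mul] at this
      · left; intro t ht
        have := hImP t ht (him t ht); rw [ho.neg_one_pow] at this; linarith
    · have him : ∀ t ∈ Set.Icc b 1, (1 - (t:ℂ)*z).im < 0 := by
        intro t ht
        rw [himw t]
        have : 0 < t * z.im := mul_pos (by linarith [ht.1]) hz
        linarith
      rcases Nat.even_or_odd m with he | ho
      · left; intro t ht
        have := hImN t ht (him t ht); rwa [he.neg_one_pow, one_mul] at this
      · right; intro t ht
        have := hImN t ht (him t ht); rw [ho.neg_one_pow] at this; linarith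
end

section
/- Let m ≥ 0 be an integer, 0 < b < 1, y a real number with y > −1, and z ∈ ℂ with 0 < |z| ≤ 1. Define L₂(s) = ((−1)^{m+1}·m!/z) · Σ_{n=0}^{m} ((−1)^n/n!) · (1+y)^{n−m−1} · (log(1−sz))^n · (1−sz)^{1+y}. Then s ↦ (log(1−sz))^m (1−sz)^y is integrable on (b,1) and ∫_b^1 (log(1−sz))^m (1−sz)^y ds = L₂(1) − L₂(b), where in the case z = 1 the value L₂(1) is taken to be 0 (the limit of L₂(s) as s → 1⁻, the singular factors (log(1−s))^n (1−s)^{1+y} having removable singularities with limit 0). -/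
open MeasureTheory Finset

/-- The antiderivative
`L₂(s) = ((−1)^{m+1}·m!/z) · Σ_{n=0}^{m} ((−1)^n/n!)·(1+y)^{n−m−1}·(log(1−sz))^n·(1−sz)^{1+y}`. -/
noncomputable def L₂ (m : ℕ) (y : ℝ) (z : ℂ) (s : ℝ) : ℂ :=
  ((-1 : ℂ) ^ (m + 1) * (Nat.factorial m : ℂ) / z) *
    ∑ n ∈ Finset.range (m + 1),
      ((-1 : ℂ) ^ n / (Nat.factorial n : ℂ)) *
        ((((1 + y) ^ ((n : ℤ) - m - 1) : ℝ)) : ℂ) *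
        (Complex.log (1 - (s : ℂ) * z)) ^ n *
        (1 - (s : ℂ) * z) ^ (((1 + y : ℝ)) : ℂ)

lemma tele (u L : ℂ) (m : ℕ) :
    ∑ n ∈ Finset.range (m + 1), ((-1:ℂ)^n / (Nat.factorial n : ℂ)) * u^n *
      ((n:ℂ) * L^(n-1) + u * L^n) = ((-1:ℂ)^m / (Nat.factorial m : ℂ)) * u^(m+1) * L^m := by
  induction m with
  | zero => simp
  | succ m ih =>
    rw [Finset.sum_range_succ, ih]
    have h1 : (Nat.factorial (m+1) : ℂ) = (m+1) * (Nat.factorial m) := by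
      rw [Nat.factorial_succ]; push_cast; ring
    have h2 : ((m:ℂ)+1) ≠ 0 := Nat.cast_add_one_ne_zero m
    have h3 : (Nat.factorial m : ℂ) ≠ 0 := by exact_mod_cast Nat.factorial_ne_zero m
    rw [h1]
    push_cast
    field_simp
    ring

open Filter Topology in
lemma re_pos {z : ℂ} (hz1 : ‖z‖ ≤ 1) {s : ℝ} (hs0 : 0 ≤ s) (hs1 : s ≤ 1)
    (h : s < 1 ∨ z ≠ 1) : 0 < (1 - (s : ℂ) * z).re := by
  have hre : (1 - (s : ℂ) * z).re = 1 - s * z.re := by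
    simp [Complex.sub_re, Complex.mul_re]
  rw [hre]
  have habs : ‖z‖ ≤ 1 := hz1
  have h1 : z.re ≤ 1 := le_trans (le_trans (le_abs_self _) (Complex.abs_re_le_norm z)) habs
  rcases h with h | h
  · nlinarith
  · have h2 : z.re < 1 := by
      rcases lt_or_eq_of_le h1 with h2 | h2
      · exact h2
      · exfalso
        have hsq : z.re ^ 2 + z.im ^ 2 ≤ 1 := by
          have h3 := Complex.sq_norm z
          rw [Complex.normSq_apply] at h3
          nlinarith [norm_nonneg z]
        have him : z.im = 0 := by nlinarith
        exact h (Complex.ext (by simp [← h2]) (by simp [him]))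
    rcases le_or_gt z.re 0 with hz | hz
    · nlinarith [mul_nonpos_of_nonneg_of_nonpos hs0 hz]
    · nlinarith [mul_le_mul_of_nonneg_right hs1 hz.le]

open Filter Topology in
lemma tendsto_abs_log_pow_mul_rpow (n : ℕ) {c : ℝ} (hc : 0 < c) :
    Tendsto (fun t : ℝ => |Real.log t| ^ n * t ^ c) (𝓝[>] (0:ℝ)) (𝓝 0) := by
  have h0 := (isLittleO_abs_log_rpow_rpow_nhdsGT_zero (n : ℝ) (neg_lt_zero.mpr hc)).tendsto_div_nhds_zero
  refine h0.congr' ?_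
  filter_upwards [self_mem_nhdsWithin] with t ht
  rw [Real.rpow_neg (le_of_lt ht), div_inv_eq_mul, Real.rpow_natCast]

open Filter Topology in
lemma tendsto_log_pow_mul_rpow (n : ℕ) {c : ℝ} (hc : 0 < c) :
    Tendsto (fun t : ℝ => (Real.log t) ^ n * t ^ c) (𝓝[>] (0:ℝ)) (𝓝 0) := by
  apply squeeze_zero_norm' _ (tendsto_abs_log_pow_mul_rpow n hc)
  filter_upwards [self_mem_nhdsWithin] with t ht
  rw [Real.norm_eq_abs, abs_mul, abs_pow, abs_of_nonneg (Real.rpow_nonneg (le_of_lt ht) c)]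

lemma integrand_ofReal {s : ℝ} (hs : s ≤ 1) (n : ℕ) (c : ℝ) :
    (Complex.log (1 - (s:ℂ))) ^ n * (1 - (s:ℂ)) ^ ((c : ℝ) : ℂ)
      = (((Real.log (1 - s)) ^ n * (1 - s) ^ c : ℝ) : ℂ) := by
  have h1 : (1:ℂ) - (s:ℂ) = ((1 - s : ℝ) : ℂ) := by push_cast; ring
  rw [h1, ← Complex.ofReal_log (by linarith), ← Complex.ofReal_cpow (by linarith),
    ← Complex.ofReal_pow, ← Complex.ofReal_mul]

lemma L₂_one (m : ℕ) {y : ℝ} (hy : -1 < y) : L₂ m y 1 1 = 0 := by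
  have hu : (1 : ℂ) + (y : ℂ) ≠ 0 := by
    have h := Complex.ofReal_ne_zero.mpr (show (1 + y : ℝ) ≠ 0 by intro h; linarith)
    push_cast at h
    exact h
  unfold L₂
  simp [Complex.zero_cpow hu]

open Filter Topology in
lemma L₂_continuousWithinAt_one (m : ℕ) {y b : ℝ} (hy : -1 < y) (hb1 : b < 1) :
    ContinuousWithinAt (L₂ m y 1) (Set.Icc b 1) 1 := by
  have hins : Set.Icc b 1 ⊆ insert 1 (Set.Ico b 1) := by
    intro x hx
    rcases eq_or_lt_of_le hx.2 with h | h
    · exact Or.inl h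
    · exact Or.inr ⟨hx.1, h⟩
  refine ContinuousWithinAt.mono ?_ hins
  apply continuousWithinAt_insert_self.mpr
  unfold ContinuousWithinAt
  rw [L₂_one m hy]
  have hmaps : Tendsto (fun s : ℝ => 1 - s) (𝓝[Set.Ico b 1] 1) (𝓝[>] (0:ℝ)) := by
    apply tendsto_nhdsWithin_of_tendsto_nhds_of_eventually_within
    · have h : Tendsto (fun s : ℝ => 1 - s) (𝓝 1) (𝓝 0) := by
        simpa using (continuous_sub_left (1:ℝ)).tendsto 1
      exact h.mono_left nhdsWithin_le_nhds
    · filter_upwards [self_mem_nhdsWithin] with s hs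
      exact sub_pos.mpr hs.2
  have hu0 : (0:ℝ) < 1 + y := by linarith
  have hterm : ∀ n : ℕ, Tendsto (fun s : ℝ => (Complex.log (1 - (s:ℂ))) ^ n *
      (1 - (s:ℂ)) ^ (((1 + y : ℝ)) : ℂ)) (𝓝[Set.Ico b 1] 1) (𝓝 0) := by
    intro n
    have hreal : Tendsto (fun s : ℝ => (Real.log (1 - s)) ^ n * (1 - s) ^ (1 + y))
        (𝓝[Set.Ico b 1] 1) (𝓝 0) := (tendsto_log_pow_mul_rpow n hu0).comp hmaps
    have hcplx : Tendsto (fun s : ℝ => ((((Real.log (1 - s)) ^ n * (1 - s) ^ (1 + y) : ℝ)) : ℂ))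
        (𝓝[Set.Ico b 1] 1) (𝓝 0) := by
      have h := (Complex.continuous_ofReal.tendsto 0).comp hreal
      rw [Complex.ofReal_zero] at h
      exact Filter.Tendsto.congr (fun s => rfl) h
    refine hcplx.congr' ?_
    filter_upwards [self_mem_nhdsWithin] with s hs
    exact (integrand_ofReal hs.2.le n (1 + y)).symm
  have hL2eq : L₂ m y 1 = fun s : ℝ => ((-1:ℂ) ^ (m+1) * ((Nat.factorial m : ℂ)) / 1) *
      ∑ n ∈ Finset.range (m+1),
        (((-1:ℂ) ^ n / (Nat.factorial n : ℂ)) * ((((1 + y) ^ ((n:ℤ) - m - 1) : ℝ)) : ℂ)) *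
        ((Complex.log (1 - (s:ℂ))) ^ n * (1 - (s:ℂ)) ^ (((1 + y : ℝ)) : ℂ)) := by
    funext s; unfold L₂; simp only [Complex.ofReal_one, mul_one]; congr 1
    exact Finset.sum_congr rfl fun n _ => by ring
  rw [hL2eq]
  have hsum := tendsto_finset_sum (Finset.range (m+1)) fun n (_ : n ∈ Finset.range (m+1)) =>
    (hterm n).const_mul (((-1:ℂ) ^ n / (Nat.factorial n : ℂ)) *
      ((((1 + y) ^ ((n:ℤ) - m - 1) : ℝ)) : ℂ))
  have hfin := hsum.const_mul ((-1:ℂ) ^ (m+1) * ((Nat.factorial m : ℂ)) / 1)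
  simpa using hfin

lemma contAt_integrand (m : ℕ) (y : ℝ) {z : ℂ} {s : ℝ} (hs : 0 < (1 - (s:ℂ) * z).re) :
    ContinuousAt (fun t : ℝ =>
      (Complex.log (1 - (t:ℂ) * z)) ^ m * (1 - (t:ℂ) * z) ^ ((y : ℝ) : ℂ)) s := by
  have hbase : ContinuousAt (fun t : ℝ => 1 - (t:ℂ) * z) s :=
    (continuous_const.sub (Complex.continuous_ofReal.mul continuous_const)).continuousAt
  have hsl : (1 - (s:ℂ) * z) ∈ Complex.slitPlane := Or.inl hs
  exact ((hbase.clog hsl).pow m).mul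
    ((continuousAt_cpow_const hsl).comp (f := fun t : ℝ => 1 - (t:ℂ) * z) hbase)

open Filter Topology intervalIntegral in
lemma integrableOn_one (m : ℕ) {b y : ℝ} (hb0 : 0 < b) (hb1 : b < 1) (hy : -1 < y) :
    IntegrableOn (fun s : ℝ =>
      (Complex.log (1 - (s:ℂ))) ^ m * (1 - (s:ℂ)) ^ ((y : ℝ) : ℂ)) (Set.Ioo b 1) := by
  set r : ℝ := (y - 1) / 2 with hr
  have hr1 : -1 < r := by rw [hr]; linarith
  have hyr : 0 < y - r := by rw [hr]; linarith
  have htend := tendsto_abs_log_pow_mul_rpow m hyr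
  have hev : ∀ᶠ t in 𝓝[>] (0:ℝ), |Real.log t| ^ m * t ^ (y - r) < 1 :=
    htend.eventually_lt_const one_pos
  obtain ⟨u, hu0, husub⟩ := mem_nhdsGT_iff_exists_Ioc_subset.mp hev
  have hu0' : (0:ℝ) < u := hu0
  have hφcont : ContinuousOn (fun t : ℝ => |Real.log t| ^ m * t ^ (y - r))
      (Set.Icc u (1 - b)) := by
    intro t ht
    have ht0 : 0 < t := lt_of_lt_of_le hu0' ht.1
    exact (((Real.continuousAt_log (ne_of_gt ht0)).abs.pow m).mul
      (Real.continuousAt_rpow_const t _ (Or.inl (ne_of_gt ht0)))).continuousWithinAt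
  obtain ⟨C2, hC2⟩ := isCompact_Icc.exists_bound_of_continuousOn hφcont
  set C := max 1 C2 with hC
  have hbound : ∀ t : ℝ, 0 < t → t ≤ 1 - b → |Real.log t| ^ m * t ^ (y - r) ≤ C := by
    intro t ht0 htb
    rcases le_or_gt t u with h | h
    · exact le_trans (le_of_lt (husub ⟨ht0, h⟩)) (le_max_left _ _)
    · have h2 := hC2 t ⟨h.le, htb⟩
      rw [Real.norm_eq_abs] at h2
      exact le_trans (le_trans (le_abs_self _) h2) (le_max_right _ _)
  have hg : IntegrableOn (fun s : ℝ => C * (1 - s) ^ r) (Set.Ioo b 1) := by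
    have h1 : IntervalIntegrable (fun x : ℝ => x ^ r) volume 0 (1 - b) :=
      intervalIntegrable_rpow' hr1
    have h2 := h1.comp_sub_left 1
    have h3 : IntervalIntegrable (fun x : ℝ => (1 - x) ^ r) volume b 1 := by
      have e1 : (1:ℝ) - (1 - b) = b := by ring
      have e2 : (1:ℝ) - 0 = 1 := by ring
      rw [e1, e2] at h2
      exact h2.symm
    have h4 := h3.const_mul C
    rwa [intervalIntegrable_iff_integrableOn_Ioo_of_le hb1.le] at h4
  have hmeas : AEStronglyMeasurable (fun s : ℝ =>
      (Complex.log (1 - (s:ℂ))) ^ m * (1 - (s:ℂ)) ^ ((y : ℝ) : ℂ))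
      (volume.restrict (Set.Ioo b 1)) := by
    apply ContinuousOn.aestronglyMeasurable _ measurableSet_Ioo
    intro s hs
    have hre : 0 < ((1:ℂ) - (s:ℂ) * 1).re :=
      re_pos (by norm_num) (le_of_lt (lt_trans hb0 hs.1)) hs.2.le (Or.inl hs.2)
    have h := (contAt_integrand m y hre).continuousWithinAt
      (s := Set.Ioo b 1)
    simpa using h
  apply Integrable.mono' hg hmeas
  rw [ae_restrict_iff' measurableSet_Ioo]
  refine ae_of_all _ fun s hs => ?_
  have ht0 : (0:ℝ) < 1 - s := by linarith [hs.2]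
  have htb : 1 - s ≤ 1 - b := by linarith [hs.1]
  rw [integrand_ofReal hs.2.le m y, Complex.norm_real, Real.norm_eq_abs, abs_mul, abs_pow,
    abs_of_nonneg (Real.rpow_nonneg ht0.le y)]
  have hsplit : (1 - s) ^ y = ((1 - s) ^ (y - r)) * (1 - s) ^ r := by
    rw [← Real.rpow_add ht0]; ring_nf
  calc |Real.log (1 - s)| ^ m * (1 - s) ^ y
      = (|Real.log (1 - s)| ^ m * (1 - s) ^ (y - r)) * (1 - s) ^ r := by rw [hsplit]; ring
    _ ≤ C * (1 - s) ^ r :=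
        mul_le_mul_of_nonneg_right (hbound _ ht0 htb) (Real.rpow_nonneg ht0.le r)
lemma hasDerivAt_L₂ (m : ℕ) (y : ℝ) (z : ℂ) (hy : -1 < y) (hz0 : z ≠ 0) {s : ℝ}
    (hs : 0 < (1 - (s : ℂ) * z).re) :
    HasDerivAt (L₂ m y z)
      ((Complex.log (1 - (s : ℂ) * z)) ^ m * (1 - (s : ℂ) * z) ^ ((y : ℝ) : ℂ)) s := by
  set w : ℂ := 1 - (s : ℂ) * z with hw
  set L : ℂ := Complex.log w with hL
  set u : ℂ := ((1 + y : ℝ) : ℂ) with hu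
  have hw0 : w ≠ 0 := by
    intro h; rw [h] at hs; simp at hs
  have hy0 : (0:ℝ) < 1 + y := by linarith
  have hu0 : u ≠ 0 := by
    simp only [hu, ne_eq, Complex.ofReal_eq_zero]; exact ne_of_gt hy0
  have hslit : w ∈ Complex.slitPlane := Or.inl hs
  have hF : HasDerivAt (fun t : ℂ => 1 - t * z) (-z) (s : ℂ) := by
    simpa using ((hasDerivAt_id ((s:ℂ))).mul_const z).const_sub 1
  have hlogC : HasDerivAt (fun t : ℂ => Complex.log (1 - t * z)) (-z / w) (s:ℂ) :=
    hF.clog hslit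
  have hcpowC : HasDerivAt (fun t : ℂ => (1 - t * z) ^ u) (u * w ^ (u - 1) * (-z)) (s:ℂ) :=
    hF.cpow_const hslit
  have hterm : ∀ n : ℕ, HasDerivAt
      (fun t : ℝ => (Complex.log (1 - (t:ℂ) * z)) ^ n * (1 - (t:ℂ) * z) ^ u)
      ((n * L ^ (n-1) * (-z / w)) * w ^ u + L ^ n * (u * w ^ (u - 1) * (-z))) s :=
    fun n => by
      have h := ((hlogC.pow n).mul hcpowC).comp_ofReal
      simp only [← hw, ← hL] at h
      exact h
  -- rewrite L₂ as constant * sum of standard terms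
  have hL₂eq : L₂ m y z = fun t : ℝ => ((-1 : ℂ) ^ (m + 1) * (Nat.factorial m : ℂ) / z) *
      ∑ n ∈ Finset.range (m + 1),
        (((-1 : ℂ) ^ n / (Nat.factorial n : ℂ)) * ((((1 + y) ^ ((n : ℤ) - m - 1) : ℝ)) : ℂ)) *
        ((Complex.log (1 - (t : ℂ) * z)) ^ n * (1 - (t : ℂ) * z) ^ u) := by
    funext t; unfold L₂; congr 1; refine Finset.sum_congr rfl fun n _ => by rw [hu]; ring
  rw [hL₂eq]
  have hsum : HasDerivAt (fun t : ℝ => ∑ n ∈ Finset.range (m + 1),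
        (((-1 : ℂ) ^ n / (Nat.factorial n : ℂ)) * ((((1 + y) ^ ((n : ℤ) - m - 1) : ℝ)) : ℂ)) *
        ((Complex.log (1 - (t : ℂ) * z)) ^ n * (1 - (t : ℂ) * z) ^ u))
      (∑ n ∈ Finset.range (m + 1),
        (((-1 : ℂ) ^ n / (Nat.factorial n : ℂ)) * ((((1 + y) ^ ((n : ℤ) - m - 1) : ℝ)) : ℂ)) *
        ((n * L ^ (n-1) * (-z / w)) * w ^ u + L ^ n * (u * w ^ (u - 1) * (-z)))) s :=
    HasDerivAt.fun_sum fun n _ => (hterm n).const_mul _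
  have := hsum.const_mul ((-1 : ℂ) ^ (m + 1) * (Nat.factorial m : ℂ) / z)
  refine this.congr_deriv (Eq.symm ?_)
  -- now the algebraic identity
  have hcast : ∀ n : ℕ, ((((1 + y) ^ ((n : ℤ) - m - 1) : ℝ)) : ℂ) = u ^ n / u ^ (m+1) := by
    intro n
    have h : ((1:ℝ) + y) ^ ((n:ℤ) - m - 1) = (1+y)^n / (1+y)^(m+1) := by
      rw [zpow_sub₀ (ne_of_gt hy0), zpow_sub₀ (ne_of_gt hy0), zpow_one,
        zpow_natCast, zpow_natCast, div_div, ← pow_succ]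
    rw [hu, h]; push_cast; ring
  have hwu : w ^ u = w ^ ((y:ℝ):ℂ) * w := by
    have : u = ((y:ℝ):ℂ) + 1 := by rw [hu]; push_cast; ring
    rw [this, Complex.cpow_add _ _ hw0, Complex.cpow_one]
  have hwu1 : w ^ (u - 1) = w ^ ((y:ℝ):ℂ) := by
    congr 1; rw [hu]; push_cast; ring
  have hkey : ∀ n ∈ Finset.range (m+1),
      (((-1 : ℂ) ^ n / (Nat.factorial n : ℂ)) * ((((1 + y) ^ ((n : ℤ) - m - 1) : ℝ)) : ℂ)) *
        ((n * L ^ (n-1) * (-z / w)) * w ^ u + L ^ n * (u * w ^ (u - 1) * (-z)))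
      = ((-z) * w ^ ((y:ℝ):ℂ) / u ^ (m+1)) *
        (((-1:ℂ)^n / (Nat.factorial n : ℂ)) * u^n * ((n:ℂ) * L^(n-1) + u * L^n)) := by
    intro n _
    have hfacn : (Nat.factorial n : ℂ) ≠ 0 := by exact_mod_cast Nat.factorial_ne_zero n
    rw [hcast n, hwu, hwu1]
    field_simp
    ring
  rw [Finset.sum_congr rfl hkey, ← Finset.mul_sum, tele u L m]
  have hfac : (Nat.factorial m : ℂ) ≠ 0 := by exact_mod_cast Nat.factorial_ne_zero m
  have hneg : ((-1:ℂ)^m) * ((-1:ℂ)^m) = 1 := by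
    rw [← pow_add]; exact Even.neg_one_pow ⟨m, rfl⟩
  have hm2 : ((-1:ℂ)) ^ (m * 2) = 1 := Even.neg_one_pow ⟨m, by ring⟩
  rw [pow_succ]
  field_simp
  linear_combination (-(L^m * w^((y:ℝ):ℂ))) * hm2

/-- For `m ≥ 0`, `0 < b < 1`, `y > −1` and `0 < |z| ≤ 1`, the function
`s ↦ (log(1−sz))^m (1−sz)^y` is integrable on `(b,1)` and
`∫_b^1 (log(1−sz))^m (1−sz)^y ds = L₂(1) − L₂(b)`, where in the case `z = 1` the value
`L₂(1)` is taken to be `0` (the limit of `L₂(s)` as `s → 1⁻`). -/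
theorem integral_log_pow_cpow (m : ℕ) (b y : ℝ) (hb0 : 0 < b) (hb1 : b < 1)
    (hy : -1 < y) (z : ℂ) (hz0 : z ≠ 0) (hz1 : ‖z‖ ≤ 1) :
    IntegrableOn
      (fun s : ℝ => (Complex.log (1 - (s : ℂ) * z)) ^ m *
        (1 - (s : ℂ) * z) ^ ((y : ℝ) : ℂ)) (Set.Ioo b 1) ∧
    ∫ s in Set.Ioo b 1, (Complex.log (1 - (s : ℂ) * z)) ^ m *
        (1 - (s : ℂ) * z) ^ ((y : ℝ) : ℂ) =
      (if z = 1 then 0 else L₂ m y z 1) - L₂ m y z b := by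
  have hint : IntegrableOn
      (fun s : ℝ => (Complex.log (1 - (s : ℂ) * z)) ^ m *
        (1 - (s : ℂ) * z) ^ ((y : ℝ) : ℂ)) (Set.Ioo b 1) := by
    by_cases hz : z = 1
    · subst hz
      have h := integrableOn_one m hb0 hb1 hy
      simp only [mul_one]
      exact h
    · have hcont : ContinuousOn
          (fun s : ℝ => (Complex.log (1 - (s : ℂ) * z)) ^ m *
            (1 - (s : ℂ) * z) ^ ((y : ℝ) : ℂ)) (Set.Icc b 1) := fun s hs =>
        (contAt_integrand m y (re_pos hz1 (le_trans hb0.le hs.1) hs.2 (Or.inr hz))).continuousWithinAt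
      exact hcont.integrableOn_Icc.mono_set Set.Ioo_subset_Icc_self
  refine ⟨hint, ?_⟩
  have hII : IntervalIntegrable
      (fun s : ℝ => (Complex.log (1 - (s : ℂ) * z)) ^ m *
        (1 - (s : ℂ) * z) ^ ((y : ℝ) : ℂ)) volume b 1 := by
    rw [intervalIntegrable_iff_integrableOn_Ioo_of_le hb1.le]
    exact hint
  have hderiv : ∀ s ∈ Set.Ioo b 1, HasDerivAt (L₂ m y z)
      ((fun s : ℝ => (Complex.log (1 - (s : ℂ) * z)) ^ m *
        (1 - (s : ℂ) * z) ^ ((y : ℝ) : ℂ)) s) s := fun s hs =>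
    hasDerivAt_L₂ m y z hy hz0 (re_pos hz1 (le_trans hb0.le hs.1.le) hs.2.le (Or.inl hs.2))
  have hcontL : ContinuousOn (L₂ m y z) (Set.Icc b 1) := by
    intro s hs
    rcases eq_or_lt_of_le hs.2 with h1 | h1
    · by_cases hz : z = 1
      · subst hz; subst h1
        exact L₂_continuousWithinAt_one m hy hb1
      · exact ((hasDerivAt_L₂ m y z hy hz0
          (re_pos hz1 (le_trans hb0.le hs.1) hs.2 (Or.inr hz))).continuousAt).continuousWithinAt
    · exact ((hasDerivAt_L₂ m y z hy hz0
        (re_pos hz1 (le_trans hb0.le hs.1) hs.2 (Or.inl h1))).continuousAt).continuousWithinAt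
  have hftc := intervalIntegral.integral_eq_sub_of_hasDerivAt_of_le hb1.le hcontL hderiv hII
  rw [intervalIntegral.integral_of_le hb1.le, MeasureTheory.integral_Ioc_eq_integral_Ioo] at hftc
  rw [hftc]
  by_cases hz : z = 1
  · subst hz
    rw [if_pos rfl, L₂_one m hy]
  · rw [if_neg hz]
end

section
/- For every z ∈ ℂ with |z| < 1 and |1−z| ≤ 1, the multiple polylogarithm Li_{2,1,1} satisfies Li_{2,1,1}(z) = (π²/12)·log²(1−z) + log(1−z)·(Li₃(1−z) + 2·ζ(3)) − 3·Li₄(1−z) + π⁴/30, where Li₃ and Li₄ are given by their (absolutely convergent) power series at the point 1−z and ζ(3) = Σ_{n≥1} 1/n³. -/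
open Real

/-- The ordinary polylogarithm `Li_s(w) = Σ_{n≥1} wⁿ/n^s`, given by its power series. -/
noncomputable def polylog (s : ℕ) (w : ℂ) : ℂ :=
  ∑' n : ℕ, w ^ (n + 1) / ((n : ℂ) + 1) ^ s

namespace MPAux

open Metric Filter Topology

/-- The open lens-shaped region. -/
def U : Set ℂ := ball (0 : ℂ) 1 ∩ ball (1 : ℂ) 1

lemma mem_U_iff {z : ℂ} : z ∈ U ↔ ‖z‖ < 1 ∧ ‖1 - z‖ < 1 := by
  unfold U
  rw [Set.mem_inter_iff, mem_ball, mem_ball, dist_eq_norm, dist_eq_norm, sub_zero,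
    norm_sub_rev]

lemma convex_U : Convex ℝ U := (convex_ball _ _).inter (convex_ball _ _)

lemma slit_of_norm_one_sub_lt {z : ℂ} (h : ‖1 - z‖ < 1) : z ∈ Complex.slitPlane := by
  rw [Complex.mem_slitPlane_iff]
  left
  have h1 : (1 - z).re ≤ ‖1 - z‖ := Complex.re_le_norm _
  have : (1 - z).re = 1 - z.re := by simp
  linarith

lemma slit_one_sub {z : ℂ} (h : ‖z‖ < 1) : 1 - z ∈ Complex.slitPlane := by
  rw [Complex.mem_slitPlane_iff]
  left
  have h1 : z.re ≤ ‖z‖ := Complex.re_le_norm _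
  have : (1 - z).re = 1 - z.re := by simp
  linarith

lemma ne_zero_of_mem {z : ℂ} (h : ‖1 - z‖ < 1) : z ≠ 0 :=
  Complex.slitPlane_ne_zero (slit_of_norm_one_sub_lt h)

lemma one_sub_ne_zero {z : ℂ} (h : ‖z‖ < 1) : 1 - z ≠ 0 :=
  Complex.slitPlane_ne_zero (slit_one_sub h)

/-- Constancy on `U` plus a boundary limit along `(0,1) ∋ t → 0⁺` pins down values on `U`. -/
lemma eq_const_of_U {f : ℂ → ℂ} (hder : ∀ z ∈ U, HasDerivAt f 0 z) {c : ℂ}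
    (hlim : Tendsto (fun t : ℝ => f t) (𝓝[>] (0 : ℝ)) (𝓝 c)) {z : ℂ} (hz : z ∈ U) :
    f z = c := by
  have key : ∀ w ∈ U, f w = f z := by
    intro w hw
    have h := convex_U.norm_image_sub_le_of_norm_hasDerivWithin_le (C := 0) (f' := fun _ => (0 : ℂ))
      (fun x hx => (hder x hx).hasDerivWithinAt) (fun x _ => by simp) hz hw
    have : ‖f w - f z‖ ≤ 0 := by simpa using h
    have := le_antisymm this (norm_nonneg _)
    rwa [norm_eq_zero, sub_eq_zero] at this
  have hev : ∀ᶠ t : ℝ in 𝓝[>] (0 : ℝ), f t = f z := by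
    filter_upwards [Ioo_mem_nhdsGT_of_mem (by constructor <;> norm_num : (0:ℝ) ∈ Set.Ico 0 1)]
    intro t ht
    refine key _ (mem_U_iff.mpr ⟨?_, ?_⟩)
    · rw [Complex.norm_real, Real.norm_eq_abs, abs_of_pos ht.1]
      exact ht.2
    · have h' : (1 : ℂ) - (t : ℂ) = ((1 - t : ℝ) : ℂ) := by push_cast; ring
      rw [h', Complex.norm_real, Real.norm_eq_abs, abs_of_pos (by linarith [ht.2])]
      linarith [ht.1]
  have h1 : Tendsto (fun _ : ℝ => f z) (𝓝[>] (0 : ℝ)) (𝓝 c) := hlim.congr' hev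
  exact tendsto_const_nhds_iff.mp h1

/-- geometric triple summability -/
lemma summable_geo3 {r : ℝ} (h0 : 0 ≤ r) (h1 : r < 1) :
    Summable (fun p : (ℕ × ℕ) × ℕ => r ^ p.1.1 * r ^ p.1.2 * r ^ p.2) := by
  have g : Summable (fun n : ℕ => r ^ n) := summable_geometric_of_lt_one h0 h1
  have g2 : Summable (fun q : ℕ × ℕ => r ^ q.1 * r ^ q.2) :=
    g.mul_of_nonneg g (fun _ => pow_nonneg h0 _) (fun _ => pow_nonneg h0 _)
  exact g2.mul_of_nonneg g (fun q => mul_nonneg (pow_nonneg h0 _) (pow_nonneg h0 _))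
    (fun _ => pow_nonneg h0 _)

lemma summable_geo2 {r : ℝ} (h0 : 0 ≤ r) (h1 : r < 1) :
    Summable (fun p : ℕ × ℕ => r ^ p.1 * r ^ p.2) := by
  have g : Summable (fun n : ℕ => r ^ n) := summable_geometric_of_lt_one h0 h1
  exact g.mul_of_nonneg g (fun _ => pow_nonneg h0 _) (fun _ => pow_nonneg h0 _)

lemma summable_inv_sq : Summable (fun n : ℕ => 1 / ((n : ℝ) + 1) ^ 2) := by
  have h : Summable (fun n : ℕ => 1 / ((n : ℝ)) ^ 2) := summable_one_div_nat_pow.mpr one_lt_two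
  have := (summable_nat_add_iff (f := fun n : ℕ => 1 / ((n : ℝ)) ^ 2) 1).mpr h
  refine this.congr fun n => by push_cast; ring

lemma norm_nat_cast_add_one (n : ℕ) : ‖((n : ℂ) + 1)‖ = (n : ℝ) + 1 := by
  have : ((n : ℂ) + 1) = (((n : ℝ) + 1 : ℝ) : ℂ) := by push_cast; ring
  rw [this, Complex.norm_real, Real.norm_eq_abs, abs_of_pos (by positivity)]

lemma polylog_term_norm {s : ℕ} (w : ℂ) (n : ℕ) :
    ‖w ^ (n + 1) / ((n : ℂ) + 1) ^ s‖ = ‖w‖ ^ (n + 1) / ((n : ℝ) + 1) ^ s := by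
  rw [norm_div, norm_pow, norm_pow, norm_nat_cast_add_one]

lemma polylog_term_bound {s : ℕ} (hs : 2 ≤ s) {w : ℂ} (hw : ‖w‖ ≤ 1) (n : ℕ) :
    ‖w ^ (n + 1) / ((n : ℂ) + 1) ^ s‖ ≤ 1 / ((n : ℝ) + 1) ^ 2 := by
  rw [polylog_term_norm]
  have h1 : ‖w‖ ^ (n + 1) ≤ 1 := pow_le_one₀ (norm_nonneg _) hw
  have h2 : ((n : ℝ) + 1) ^ 2 ≤ ((n : ℝ) + 1) ^ s :=
    pow_le_pow_right₀ (by linarith [Nat.cast_nonneg (α := ℝ) n]) hs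
  have h3 : (0:ℝ) < ((n : ℝ) + 1) ^ 2 := by positivity
  calc ‖w‖ ^ (n + 1) / ((n : ℝ) + 1) ^ s ≤ 1 / ((n : ℝ) + 1) ^ s := by gcongr
    _ ≤ 1 / ((n : ℝ) + 1) ^ 2 := one_div_le_one_div_of_le h3 h2


lemma summable_polylog {s : ℕ} (hs : 2 ≤ s) {w : ℂ} (hw : ‖w‖ ≤ 1) :
    Summable (fun n : ℕ => w ^ (n + 1) / ((n : ℂ) + 1) ^ s) :=
  Summable.of_norm_bounded summable_inv_sq (polylog_term_bound hs hw)

lemma continuousOn_polylog {s : ℕ} (hs : 2 ≤ s) :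
    ContinuousOn (polylog s) (closedBall (0 : ℂ) 1) := by
  unfold polylog
  refine continuousOn_tsum (fun n => Continuous.continuousOn (by fun_prop)) summable_inv_sq ?_
  intro n x hx
  exact polylog_term_bound hs (by simpa [mem_closedBall, dist_eq_norm] using hx) n

lemma continuousWithinAt_polylog {s : ℕ} (hs : 2 ≤ s) {w : ℂ} (hw : ‖w‖ ≤ 1) :
    ContinuousWithinAt (polylog s) (closedBall (0 : ℂ) 1) w :=
  (continuousOn_polylog hs) w (by simpa [mem_closedBall, dist_eq_norm] using hw)

lemma continuousAt_polylog {s : ℕ} (hs : 2 ≤ s) {w : ℂ} (hw : ‖w‖ < 1) :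
    ContinuousAt (polylog s) w := by
  refine (continuousOn_polylog hs).continuousAt ?_
  refine mem_of_superset (isOpen_ball.mem_nhds ?_) ball_subset_closedBall
  simpa [mem_ball, dist_eq_norm] using hw

lemma polylog_zero_eq (s : ℕ) : polylog s 0 = 0 := by
  unfold polylog
  simp

lemma hasDerivAt_polylog (s : ℕ) {w : ℂ} (hw : ‖w‖ < 1) (hw0 : w ≠ 0) :
    HasDerivAt (polylog (s + 1)) (polylog s w / w) w := by
  set r : ℝ := (1 + ‖w‖) / 2 with hr
  have hr0 : 0 ≤ r := by positivity
  have hr1 : r < 1 := by simp only [hr]; linarith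
  have hwr : ‖w‖ < r := by simp only [hr]; linarith [norm_nonneg w]
  have hcast : ∀ n : ℕ, ((n : ℂ) + 1) ≠ 0 := fun n => by
    exact_mod_cast Nat.cast_add_one_ne_zero (R := ℂ) n
  have key : HasDerivAt (fun y : ℂ => ∑' n : ℕ, y ^ (n + 1) / ((n : ℂ) + 1) ^ (s + 1))
      (∑' n : ℕ, w ^ n / ((n : ℂ) + 1) ^ s) w := by
    refine hasDerivAt_tsum_of_isPreconnected (u := fun n : ℕ => r ^ n)
      (t := ball (0 : ℂ) r) (g' := fun n y => y ^ n / ((n : ℂ) + 1) ^ s)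
      (summable_geometric_of_lt_one hr0 hr1) isOpen_ball (convex_ball _ _).isPreconnected
      ?_ ?_ (y₀ := 0) (by simpa [mem_ball, dist_eq_norm] using (by positivity : (0:ℝ) < r)) ?_ ?_
    · intro n y _
      have hA : ((n : ℂ) + 1) ≠ 0 := hcast n
      have h := (hasDerivAt_pow (n + 1) y).div_const (((n : ℂ) + 1) ^ (s + 1))
      have heq : ((↑(n + 1) : ℂ)) * y ^ (n + 1 - 1) / ((n : ℂ) + 1) ^ (s + 1)
          = y ^ n / ((n : ℂ) + 1) ^ s := by
        simp only [Nat.add_sub_cancel]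
        push_cast
        rw [pow_succ, mul_comm ((n : ℂ) + 1) (y ^ n), mul_div_mul_right _ _ hA]
      rw [heq] at h
      exact h
    · intro n y hy
      have hy' : ‖y‖ ≤ r := by
        rw [mem_ball, dist_eq_norm, sub_zero] at hy
        exact hy.le
      rw [norm_div, norm_pow, norm_pow, norm_nat_cast_add_one]
      have h1 : ‖y‖ ^ n ≤ r ^ n := pow_le_pow_left₀ (norm_nonneg _) hy' n
      have h2 : (1:ℝ) ≤ ((n : ℝ) + 1) ^ s := one_le_pow₀ (by linarith [Nat.cast_nonneg (α := ℝ) n])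
      calc ‖y‖ ^ n / ((n : ℝ) + 1) ^ s ≤ ‖y‖ ^ n / 1 := by gcongr
        _ = ‖y‖ ^ n := div_one _
        _ ≤ r ^ n := h1
    · refine summable_zero.congr fun n => ?_
      simp
    · simpa [mem_ball, dist_eq_norm] using hwr
  have heq : (∑' n : ℕ, w ^ n / ((n : ℂ) + 1) ^ s) = polylog s w / w := by
    unfold polylog
    rw [eq_div_iff hw0, ← tsum_mul_right]
    refine tsum_congr fun n => ?_
    rw [pow_succ]
    ring
  rw [heq] at key
  exact key

lemma polylog_one_eq {w : ℂ} (hw : ‖w‖ < 1) : polylog 1 w = -Complex.log (1 - w) := by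
  have h := Complex.hasSum_taylorSeries_neg_log hw
  have h0 : (w ^ 0 / ((0:ℕ) : ℂ)) = 0 := by simp
  have h1 : HasSum (fun n : ℕ => w ^ (n + 1) / (((n + 1 : ℕ)) : ℂ)) (-Complex.log (1 - w)) := by
    refine (hasSum_nat_add_iff (f := fun n : ℕ => w ^ n / (n : ℂ)) 1).mpr ?_
    simpa using h
  have h2 : HasSum (fun n : ℕ => w ^ (n + 1) / ((n : ℂ) + 1) ^ 1) (-Complex.log (1 - w)) := by
    refine h1.congr_fun fun n => by push_cast; ring
  exact h2.tsum_eq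

lemma hasSum_shift_cast {a : ℝ} {s : ℕ} (h : HasSum (fun n : ℕ => (1 : ℝ) / (n : ℝ) ^ s) a)
    (hs : 0 < s) :
    polylog s 1 = (a : ℂ) := by
  have h1 : HasSum (fun n : ℕ => (1 : ℝ) / ((n + 1 : ℕ) : ℝ) ^ s) a := by
    refine (hasSum_nat_add_iff (f := fun n : ℕ => (1:ℝ) / (n : ℝ) ^ s) 1).mpr ?_
    simpa [zero_pow hs.ne'] using h
  have h2 : HasSum (fun n : ℕ => ((1 : ℝ) / ((n + 1 : ℕ) : ℝ) ^ s : ℝ) : ℕ → ℂ) (a : ℂ) :=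
    (Complex.hasSum_ofReal).mpr h1
  have h3 : HasSum (fun n : ℕ => (1 : ℂ) ^ (n + 1) / ((n : ℂ) + 1) ^ s) (a : ℂ) :=
    h2.congr_fun fun n => by push_cast; simp
  exact h3.tsum_eq

lemma polylog_two_one : polylog 2 1 = ((π : ℂ)) ^ 2 / 6 := by
  rw [hasSum_shift_cast hasSum_zeta_two (by norm_num)]
  push_cast
  ring

lemma polylog_four_one : polylog 4 1 = ((π : ℂ)) ^ 4 / 90 := by
  rw [hasSum_shift_cast hasSum_zeta_four (by norm_num)]
  push_cast
  ring


/-! ### The double and triple series -/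

noncomputable def F3 (z : ℂ) : ℂ :=
  ∑' p : ℕ × ℕ, z ^ (p.1 + p.2 + 2) / (((p.1 : ℂ) + 1) ^ 2 * ((p.1 : ℂ) + (p.2 : ℂ) + 2))

noncomputable def F4 (z : ℂ) : ℂ :=
  ∑' p : (ℕ × ℕ) × ℕ, z ^ (p.1.1 + p.1.2 + p.2 + 3) /
    (((p.1.1 : ℂ) + 1) ^ 2 * ((p.1.1 : ℂ) + (p.1.2 : ℂ) + 2) *
      ((p.1.1 : ℂ) + (p.1.2 : ℂ) + (p.2 : ℂ) + 3))

lemma D2_cast (a b : ℕ) :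
    ((a : ℂ) + 1) ^ 2 * ((a : ℂ) + (b : ℂ) + 2) = (((a+1)^2*(a+b+2) : ℕ) : ℂ) := by
  push_cast; ring

lemma D3_cast (a b c : ℕ) :
    ((a : ℂ) + 1) ^ 2 * ((a : ℂ) + (b : ℂ) + 2) * ((a : ℂ) + (b : ℂ) + (c : ℂ) + 3)
      = (((a+1)^2*(a+b+2)*(a+b+c+3) : ℕ) : ℂ) := by
  push_cast; ring

lemma norm_nat_cast_ge_one {k : ℕ} (hk : 0 < k) : (1:ℝ) ≤ ‖((k : ℕ) : ℂ)‖ := by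
  rw [Complex.norm_natCast]
  exact_mod_cast hk

/-- bound for a power divided by a `≥ 1` natural denominator -/
lemma term_le {z : ℂ} {r : ℝ} (hzr : ‖z‖ ≤ r) (hr1 : r ≤ 1) {k : ℕ} (hk : 0 < k)
    {e e' : ℕ} (hee : e' ≤ e) : ‖z ^ e / ((k : ℕ) : ℂ)‖ ≤ r ^ e' := by
  have h0 : (0:ℝ) ≤ r := le_trans (norm_nonneg z) hzr
  rw [norm_div, norm_pow]
  have h1 : ‖z‖ ^ e ≤ r ^ e := pow_le_pow_left₀ (norm_nonneg _) hzr e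
  have h2 : r ^ e ≤ r ^ e' := pow_le_pow_of_le_one h0 hr1 hee
  have h3 : (1:ℝ) ≤ ‖((k : ℕ) : ℂ)‖ := norm_nat_cast_ge_one hk
  calc ‖z‖ ^ e / ‖((k : ℕ) : ℂ)‖ ≤ ‖z‖ ^ e / 1 := by gcongr
    _ = ‖z‖ ^ e := div_one _
    _ ≤ r ^ e' := h1.trans h2

lemma F3_term_bound {z : ℂ} {r : ℝ} (hzr : ‖z‖ ≤ r) (hr1 : r ≤ 1) (p : ℕ × ℕ) :
    ‖z ^ (p.1 + p.2 + 2) / (((p.1 : ℂ) + 1) ^ 2 * ((p.1 : ℂ) + (p.2 : ℂ) + 2))‖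
      ≤ r ^ p.1 * r ^ p.2 := by
  obtain ⟨a, b⟩ := p
  rw [D2_cast, ← pow_add]
  exact term_le hzr hr1 (by positivity) (by omega)

lemma F4_term_bound {z : ℂ} {r : ℝ} (hzr : ‖z‖ ≤ r) (hr1 : r ≤ 1) (p : (ℕ × ℕ) × ℕ) :
    ‖z ^ (p.1.1 + p.1.2 + p.2 + 3) /
      (((p.1.1 : ℂ) + 1) ^ 2 * ((p.1.1 : ℂ) + (p.1.2 : ℂ) + 2) *
        ((p.1.1 : ℂ) + (p.1.2 : ℂ) + (p.2 : ℂ) + 3))‖ ≤ r ^ p.1.1 * r ^ p.1.2 * r ^ p.2 := by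
  obtain ⟨⟨a, b⟩, c⟩ := p
  rw [D3_cast, ← pow_add, ← pow_add]
  exact term_le hzr hr1 (by positivity) (by omega)

lemma continuousAt_F3 {z : ℂ} (hz : ‖z‖ < 1) : ContinuousAt F3 z := by
  set r : ℝ := (1 + ‖z‖) / 2 with hr
  have hr0 : 0 ≤ r := by positivity
  have hr1 : r < 1 := by simp only [hr]; linarith
  have hzr : ‖z‖ < r := by simp only [hr]; linarith [norm_nonneg z]
  have hcont : ContinuousOn F3 (closedBall (0:ℂ) r) := by
    unfold F3
    refine continuousOn_tsum (fun p => Continuous.continuousOn (by fun_prop))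
      (summable_geo2 hr0 hr1) ?_
    intro p x hx
    rw [mem_closedBall, dist_eq_norm, sub_zero] at hx
    exact F3_term_bound hx hr1.le p
  refine hcont.continuousAt ?_
  refine mem_of_superset (isOpen_ball.mem_nhds ?_) ball_subset_closedBall
  rwa [mem_ball, dist_eq_norm, sub_zero]

lemma continuousAt_F4 {z : ℂ} (hz : ‖z‖ < 1) : ContinuousAt F4 z := by
  set r : ℝ := (1 + ‖z‖) / 2 with hr
  have hr0 : 0 ≤ r := by positivity
  have hr1 : r < 1 := by simp only [hr]; linarith
  have hzr : ‖z‖ < r := by simp only [hr]; linarith [norm_nonneg z]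
  have hcont : ContinuousOn F4 (closedBall (0:ℂ) r) := by
    unfold F4
    refine continuousOn_tsum (fun p => Continuous.continuousOn (by fun_prop))
      (summable_geo3 hr0 hr1) ?_
    intro p x hx
    rw [mem_closedBall, dist_eq_norm, sub_zero] at hx
    exact F4_term_bound hx hr1.le p
  refine hcont.continuousAt ?_
  refine mem_of_superset (isOpen_ball.mem_nhds ?_) ball_subset_closedBall
  rwa [mem_ball, dist_eq_norm, sub_zero]

lemma F3_zero : F3 0 = 0 := by
  unfold F3
  convert tsum_zero with p
  rw [zero_pow (by omega), zero_div]

lemma F4_zero : F4 0 = 0 := by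
  unfold F4
  convert tsum_zero with p
  rw [zero_pow (by omega), zero_div]


lemma cast2_ne (a : ℕ) : ((a : ℂ) + 1) ≠ 0 := by
  exact_mod_cast Nat.cast_add_one_ne_zero (R := ℂ) a

lemma castk_ne {k : ℕ} (hk : 0 < k) : ((k : ℕ) : ℂ) ≠ 0 :=
  Nat.cast_ne_zero.mpr hk.ne'

lemma hasDerivAt_F3 {z : ℂ} (hz : ‖z‖ < 1) : HasDerivAt F3 (polylog 2 z / (1 - z)) z := by
  set r : ℝ := (1 + ‖z‖) / 2 with hr
  have hr0 : 0 ≤ r := by positivity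
  have hr1 : r < 1 := by simp only [hr]; linarith
  have hzr : ‖z‖ < r := by simp only [hr]; linarith [norm_nonneg z]
  have key : HasDerivAt
      (fun y : ℂ => ∑' p : ℕ × ℕ,
        y ^ (p.1 + p.2 + 2) / (((p.1 : ℂ) + 1) ^ 2 * ((p.1 : ℂ) + (p.2 : ℂ) + 2)))
      (∑' p : ℕ × ℕ, z ^ (p.1 + p.2 + 1) / ((p.1 : ℂ) + 1) ^ 2) z := by
    refine hasDerivAt_tsum_of_isPreconnected (u := fun p : ℕ × ℕ => r ^ p.1 * r ^ p.2)
      (t := ball (0 : ℂ) r)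
      (g' := fun p y => y ^ (p.1 + p.2 + 1) / ((p.1 : ℂ) + 1) ^ 2)
      (summable_geo2 hr0 hr1) isOpen_ball (convex_ball _ _).isPreconnected
      ?_ ?_ (y₀ := 0) (mem_ball_self (by positivity)) ?_ ?_
    · intro p y _
      obtain ⟨a, b⟩ := p
      have hA : ((a : ℂ) + 1) ≠ 0 := cast2_ne a
      have hB : ((a : ℂ) + (b : ℂ) + 2) ≠ 0 := by
        have h' : ((a : ℂ) + (b : ℂ) + 2) = ((a + b + 2 : ℕ) : ℂ) := by push_cast; ring
        rw [h']; exact castk_ne (by omega)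
      have h := (hasDerivAt_pow (a + b + 2) y).div_const
        (((a : ℂ) + 1) ^ 2 * ((a : ℂ) + (b : ℂ) + 2))
      have heq : ((↑(a + b + 2) : ℂ)) * y ^ (a + b + 2 - 1) /
          (((a : ℂ) + 1) ^ 2 * ((a : ℂ) + (b : ℂ) + 2))
          = y ^ (a + b + 1) / ((a : ℂ) + 1) ^ 2 := by
        have he : a + b + 2 - 1 = a + b + 1 := by omega
        rw [he]
        push_cast
        field_simp
      rw [heq] at h
      exact h
    · intro p y hy
      rw [mem_ball, dist_eq_norm, sub_zero] at hy
      obtain ⟨a, b⟩ := p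
      dsimp only
      have hcast : ((a : ℂ) + 1) ^ 2 = (((a + 1) ^ 2 : ℕ) : ℂ) := by push_cast; ring
      rw [hcast]
      calc ‖y ^ (a + b + 1) / (((a + 1) ^ 2 : ℕ) : ℂ)‖ ≤ r ^ (a + b) :=
            term_le hy.le hr1.le (by positivity) (by omega)
        _ = r ^ a * r ^ b := pow_add r a b
    · refine summable_zero.congr fun p => ?_
      rw [zero_pow (by omega), zero_div]
    · rwa [mem_ball, dist_eq_norm, sub_zero]
  have hsum : Summable (fun p : ℕ × ℕ => z ^ (p.1 + p.2 + 1) / ((p.1 : ℂ) + 1) ^ 2) := by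
    refine Summable.of_norm_bounded (summable_geo2 (norm_nonneg z) hz) ?_
    intro p
    obtain ⟨a, b⟩ := p
    have hcast : ((a : ℂ) + 1) ^ 2 = (((a + 1) ^ 2 : ℕ) : ℂ) := by push_cast; ring
    rw [hcast]
    calc ‖z ^ (a + b + 1) / (((a + 1) ^ 2 : ℕ) : ℂ)‖ ≤ ‖z‖ ^ (a + b) :=
          term_le le_rfl hz.le (by positivity) (by omega)
      _ = ‖z‖ ^ a * ‖z‖ ^ b := pow_add _ a b
  have heq : (∑' p : ℕ × ℕ, z ^ (p.1 + p.2 + 1) / ((p.1 : ℂ) + 1) ^ 2)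
      = polylog 2 z / (1 - z) := by
    rw [Summable.tsum_prod' hsum (fun a => by
      have hgeo : Summable (fun b : ℕ => (z ^ (a + 1) / ((a : ℂ) + 1) ^ 2) * z ^ b) :=
        (summable_geometric_of_norm_lt_one hz).mul_left _
      refine hgeo.congr fun b => ?_
      dsimp only
      rw [show a + b + 1 = (a + 1) + b by omega, pow_add]
      ring)]
    have hinner : ∀ a : ℕ, (∑' b : ℕ, z ^ (a + b + 1) / ((a : ℂ) + 1) ^ 2)
        = (z ^ (a + 1) / ((a : ℂ) + 1) ^ 2) * (1 - z)⁻¹ := by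
      intro a
      rw [← tsum_geometric_of_norm_lt_one hz, ← tsum_mul_left]
      refine tsum_congr fun b => ?_
      rw [show a + b + 1 = (a + 1) + b by omega, pow_add]
      ring
    rw [tsum_congr hinner, tsum_mul_right, div_eq_mul_inv]
    rfl
  rw [heq] at key
  exact key

lemma hasDerivAt_F4 {z : ℂ} (hz : ‖z‖ < 1) : HasDerivAt F4 (F3 z / (1 - z)) z := by
  set r : ℝ := (1 + ‖z‖) / 2 with hr
  have hr0 : 0 ≤ r := by positivity
  have hr1 : r < 1 := by simp only [hr]; linarith
  have hzr : ‖z‖ < r := by simp only [hr]; linarith [norm_nonneg z]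
  have key : HasDerivAt
      (fun y : ℂ => ∑' p : (ℕ × ℕ) × ℕ,
        y ^ (p.1.1 + p.1.2 + p.2 + 3) /
          (((p.1.1 : ℂ) + 1) ^ 2 * ((p.1.1 : ℂ) + (p.1.2 : ℂ) + 2) *
            ((p.1.1 : ℂ) + (p.1.2 : ℂ) + (p.2 : ℂ) + 3)))
      (∑' p : (ℕ × ℕ) × ℕ, z ^ (p.1.1 + p.1.2 + p.2 + 2) /
          (((p.1.1 : ℂ) + 1) ^ 2 * ((p.1.1 : ℂ) + (p.1.2 : ℂ) + 2))) z := by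
    refine hasDerivAt_tsum_of_isPreconnected
      (u := fun p : (ℕ × ℕ) × ℕ => r ^ p.1.1 * r ^ p.1.2 * r ^ p.2)
      (t := ball (0 : ℂ) r)
      (g' := fun p y => y ^ (p.1.1 + p.1.2 + p.2 + 2) /
          (((p.1.1 : ℂ) + 1) ^ 2 * ((p.1.1 : ℂ) + (p.1.2 : ℂ) + 2)))
      (summable_geo3 hr0 hr1) isOpen_ball (convex_ball _ _).isPreconnected
      ?_ ?_ (y₀ := 0) (mem_ball_self (by positivity)) ?_ ?_
    · intro p y _
      obtain ⟨⟨a, b⟩, c⟩ := p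
      have hA : ((a : ℂ) + 1) ≠ 0 := cast2_ne a
      have hB : ((a : ℂ) + (b : ℂ) + 2) ≠ 0 := by
        have h' : ((a : ℂ) + (b : ℂ) + 2) = ((a + b + 2 : ℕ) : ℂ) := by push_cast; ring
        rw [h']; exact castk_ne (by omega)
      have hC : ((a : ℂ) + (b : ℂ) + (c : ℂ) + 3) ≠ 0 := by
        have h' : ((a : ℂ) + (b : ℂ) + (c : ℂ) + 3) = ((a + b + c + 3 : ℕ) : ℂ) := by
          push_cast; ring
        rw [h']; exact castk_ne (by omega)
      have h := (hasDerivAt_pow (a + b + c + 3) y).div_const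
        (((a : ℂ) + 1) ^ 2 * ((a : ℂ) + (b : ℂ) + 2) * ((a : ℂ) + (b : ℂ) + (c : ℂ) + 3))
      have heq : ((↑(a + b + c + 3) : ℂ)) * y ^ (a + b + c + 3 - 1) /
          (((a : ℂ) + 1) ^ 2 * ((a : ℂ) + (b : ℂ) + 2) * ((a : ℂ) + (b : ℂ) + (c : ℂ) + 3))
          = y ^ (a + b + c + 2) / (((a : ℂ) + 1) ^ 2 * ((a : ℂ) + (b : ℂ) + 2)) := by
        have he : a + b + c + 3 - 1 = a + b + c + 2 := by omega
        rw [he]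
        push_cast
        field_simp
      rw [heq] at h
      exact h
    · intro p y hy
      rw [mem_ball, dist_eq_norm, sub_zero] at hy
      obtain ⟨⟨a, b⟩, c⟩ := p
      dsimp only
      have hcast : ((a : ℂ) + 1) ^ 2 * ((a : ℂ) + (b : ℂ) + 2)
          = (((a + 1) ^ 2 * (a + b + 2) : ℕ) : ℂ) := by push_cast; ring
      rw [hcast]
      calc ‖y ^ (a + b + c + 2) / (((a + 1) ^ 2 * (a + b + 2) : ℕ) : ℂ)‖
            ≤ r ^ (a + b + c) := term_le hy.le hr1.le (by positivity) (by omega)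
        _ = r ^ a * r ^ b * r ^ c := by rw [pow_add, pow_add]
    · refine summable_zero.congr fun p => ?_
      rw [zero_pow (by omega), zero_div]
    · rwa [mem_ball, dist_eq_norm, sub_zero]
  have hsum : Summable (fun p : (ℕ × ℕ) × ℕ => z ^ (p.1.1 + p.1.2 + p.2 + 2) /
      (((p.1.1 : ℂ) + 1) ^ 2 * ((p.1.1 : ℂ) + (p.1.2 : ℂ) + 2))) := by
    refine Summable.of_norm_bounded (summable_geo3 (norm_nonneg z) hz) ?_
    intro p
    obtain ⟨⟨a, b⟩, c⟩ := p
    have hcast : ((a : ℂ) + 1) ^ 2 * ((a : ℂ) + (b : ℂ) + 2)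
        = (((a + 1) ^ 2 * (a + b + 2) : ℕ) : ℂ) := by push_cast; ring
    rw [hcast]
    calc ‖z ^ (a + b + c + 2) / (((a + 1) ^ 2 * (a + b + 2) : ℕ) : ℂ)‖
          ≤ ‖z‖ ^ (a + b + c) := term_le le_rfl hz.le (by positivity) (by omega)
      _ = ‖z‖ ^ a * ‖z‖ ^ b * ‖z‖ ^ c := by rw [pow_add, pow_add]
  have heq : (∑' p : (ℕ × ℕ) × ℕ, z ^ (p.1.1 + p.1.2 + p.2 + 2) /
      (((p.1.1 : ℂ) + 1) ^ 2 * ((p.1.1 : ℂ) + (p.1.2 : ℂ) + 2)))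
      = F3 z / (1 - z) := by
    rw [Summable.tsum_prod' hsum (fun q => by
      have hgeo : Summable (fun c : ℕ =>
          (z ^ (q.1 + q.2 + 2) / (((q.1 : ℂ) + 1) ^ 2 * ((q.1 : ℂ) + (q.2 : ℂ) + 2))) * z ^ c) :=
        (summable_geometric_of_norm_lt_one hz).mul_left _
      refine hgeo.congr fun c => ?_
      dsimp only
      rw [show q.1 + q.2 + c + 2 = (q.1 + q.2 + 2) + c by omega, pow_add]
      ring)]
    have hinner : ∀ q : ℕ × ℕ, (∑' c : ℕ, z ^ (q.1 + q.2 + c + 2) /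
        (((q.1 : ℂ) + 1) ^ 2 * ((q.1 : ℂ) + (q.2 : ℂ) + 2)))
        = (z ^ (q.1 + q.2 + 2) / (((q.1 : ℂ) + 1) ^ 2 * ((q.1 : ℂ) + (q.2 : ℂ) + 2)))
          * (1 - z)⁻¹ := by
      intro q
      rw [← tsum_geometric_of_norm_lt_one hz, ← tsum_mul_left]
      refine tsum_congr fun c => ?_
      rw [show q.1 + q.2 + c + 2 = (q.1 + q.2 + 2) + c by omega, pow_add]
      ring
    rw [tsum_congr hinner, tsum_mul_right, div_eq_mul_inv]
    rfl
  rw [heq] at key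
  exact key


/-! ### limits along `t → 0⁺` -/

lemma tendsto_ofReal_zero : Filter.Tendsto (fun t : ℝ => (t : ℂ)) (𝓝[>] (0:ℝ)) (𝓝 0) := by
  have := (Complex.continuous_ofReal.tendsto 0).mono_left (nhdsWithin_le_nhds (s := Set.Ioi (0:ℝ)))
  simpa using this

lemma tendsto_one_sub_ofReal : Filter.Tendsto (fun t : ℝ => (1 : ℂ) - t) (𝓝[>] (0:ℝ)) (𝓝 1) := by
  have h := tendsto_const_nhds (x := (1:ℂ)) (f := 𝓝[>] (0:ℝ)) |>.sub tendsto_ofReal_zero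
  simpa using h

lemma eventually_Ioo {b : ℝ} (hb : 0 < b) (hb1 : b ≤ 1) :
    ∀ᶠ t : ℝ in 𝓝[>] (0:ℝ), t ∈ Set.Ioo 0 b :=
  Ioo_mem_nhdsGT_of_mem ⟨le_refl 0, hb⟩

lemma eventually_one_sub_mem :
    ∀ᶠ t : ℝ in 𝓝[>] (0:ℝ), ((1 : ℂ) - t) ∈ closedBall (0:ℂ) 1 := by
  filter_upwards [eventually_Ioo one_pos le_rfl] with t ht
  rw [mem_closedBall, dist_eq_norm, sub_zero]
  have h' : (1 : ℂ) - (t : ℂ) = ((1 - t : ℝ) : ℂ) := by push_cast; ring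
  rw [h', Complex.norm_real, Real.norm_eq_abs, abs_of_pos (by linarith [ht.2])]
  linarith [ht.1]

lemma tendsto_polylog_one_sub {s : ℕ} (hs : 2 ≤ s) :
    Filter.Tendsto (fun t : ℝ => polylog s ((1:ℂ) - t)) (𝓝[>] (0:ℝ)) (𝓝 (polylog s 1)) := by
  have hw : ContinuousWithinAt (polylog s) (closedBall (0:ℂ) 1) 1 :=
    continuousWithinAt_polylog hs (by simp)
  refine hw.tendsto.comp ?_
  exact tendsto_nhdsWithin_of_tendsto_nhds_of_eventually_within _ tendsto_one_sub_ofReal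
    eventually_one_sub_mem

lemma tendsto_polylog_ofReal {s : ℕ} (hs : 2 ≤ s) :
    Filter.Tendsto (fun t : ℝ => polylog s ((t:ℂ))) (𝓝[>] (0:ℝ)) (𝓝 0) := by
  have h := ((continuousAt_polylog hs (w := 0) (by simp)).tendsto).comp tendsto_ofReal_zero
  rwa [polylog_zero_eq] at h

lemma tendsto_log_one_sub :
    Filter.Tendsto (fun t : ℝ => Complex.log ((1:ℂ) - t)) (𝓝[>] (0:ℝ)) (𝓝 0) := by
  have hc : ContinuousAt Complex.log 1 :=
    continuousAt_clog (by simp [Complex.mem_slitPlane_iff])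
  have h := hc.tendsto.comp tendsto_one_sub_ofReal
  rwa [Complex.log_one] at h

lemma tendsto_log_mul_log :
    Filter.Tendsto (fun t : ℝ => Complex.log (t:ℂ) * Complex.log ((1:ℂ) - t))
      (𝓝[>] (0:ℝ)) (𝓝 0) := by
  have hreal : Filter.Tendsto (fun t : ℝ => Real.log t * Real.log (1 - t)) (𝓝[>] (0:ℝ)) (𝓝 0) := by
    have hg : Filter.Tendsto (fun t : ℝ => (-2 : ℝ) * (Real.log t * t)) (𝓝[>] (0:ℝ)) (𝓝 0) := by
      have h1 := (tendsto_log_mul_rpow_nhdsGT_zero one_pos).const_mul (-2 : ℝ)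
      simp only [Real.rpow_one, mul_zero] at h1
      exact h1
    refine squeeze_zero_norm' ?_ hg
    filter_upwards [eventually_Ioo (b := 1/2) (by norm_num) (by norm_num)] with t ht
    have ht0 : 0 < t := ht.1
    have ht2 : t < 1/2 := ht.2
    have hlt : Real.log t ≤ 0 := Real.log_nonpos ht0.le (by linarith)
    have hl1 : Real.log (1 - t) ≤ 0 := Real.log_nonpos (by linarith) (by linarith)
    have hkey : -Real.log (1 - t) ≤ 2 * t := by
      have hpos : (0:ℝ) < (1 - t)⁻¹ := by
        rw [inv_pos]; linarith
      have h2 := Real.log_le_sub_one_of_pos hpos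
      rw [Real.log_inv] at h2
      have h3 : (1 - t)⁻¹ - 1 ≤ 2 * t := by
        rw [inv_eq_one_div, div_sub' (by linarith : (1:ℝ) - t ≠ 0)]
        rw [div_le_iff₀ (by linarith : (0:ℝ) < 1 - t)]
        nlinarith
      linarith
    rw [Real.norm_eq_abs, abs_mul, abs_of_nonpos hlt, abs_of_nonpos hl1]
    nlinarith [hkey, neg_nonneg.mpr hlt]
  have hev : ∀ᶠ t : ℝ in 𝓝[>] (0:ℝ),
      ((Real.log t * Real.log (1 - t) : ℝ) : ℂ)
        = Complex.log (t:ℂ) * Complex.log ((1:ℂ) - t) := by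
    filter_upwards [eventually_Ioo one_pos le_rfl] with t ht
    have h1 : ((Real.log t : ℝ) : ℂ) = Complex.log (t:ℂ) := Complex.ofReal_log ht.1.le
    have h2 : ((Real.log (1 - t) : ℝ) : ℂ) = Complex.log (((1 - t : ℝ)) : ℂ) :=
      Complex.ofReal_log (by linarith [ht.2])
    have h3 : (((1 - t : ℝ)) : ℂ) = (1:ℂ) - t := by push_cast; ring
    rw [h3] at h2
    push_cast [← h1, ← h2]
    ring
  have hC : Filter.Tendsto (fun t : ℝ => ((Real.log t * Real.log (1 - t) : ℝ) : ℂ))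
      (𝓝[>] (0:ℝ)) (𝓝 0) := by
    have h2 := (Complex.continuous_ofReal.tendsto 0).comp hreal
    simpa only [Complex.ofReal_zero, Function.comp_def] using h2
  exact hC.congr' hev

/-! ### the Euler reflection formula for the dilogarithm -/

lemma euler {z : ℂ} (hz : z ∈ U) :
    polylog 2 z + polylog 2 (1 - z) + Complex.log z * Complex.log (1 - z)
      = (π : ℂ) ^ 2 / 6 := by
  have hder : ∀ w ∈ U, HasDerivAt (fun z : ℂ =>
      polylog 2 z + polylog 2 (1 - z) + Complex.log z * Complex.log (1 - z)) 0 w := by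
    intro w hw
    obtain ⟨hw1, hw2⟩ := mem_U_iff.mp hw
    have hw0 : w ≠ 0 := ne_zero_of_mem hw2
    have hw10 : (1:ℂ) - w ≠ 0 := one_sub_ne_zero hw1
    have hone_sub : HasDerivAt (fun y : ℂ => 1 - y) (-1) w := by
      simpa using (hasDerivAt_id w).const_sub 1
    have h1 : HasDerivAt (polylog 2) (polylog 1 w / w) w := by
      have := hasDerivAt_polylog 1 hw1 hw0
      norm_num at this
      exact this
    have h2 : HasDerivAt (fun y : ℂ => polylog 2 (1 - y))
        (polylog 1 (1 - w) / (1 - w) * (-1)) w := by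
      have hp : HasDerivAt (polylog 2) (polylog 1 (1 - w) / (1 - w)) (1 - w) := by
        have := hasDerivAt_polylog 1 hw2 hw10
        norm_num at this
        exact this
      exact hp.comp w hone_sub
    have h3 : HasDerivAt Complex.log w⁻¹ w :=
      Complex.hasDerivAt_log (slit_of_norm_one_sub_lt hw2)
    have h4 : HasDerivAt (fun y : ℂ => Complex.log (1 - y)) ((1 - w)⁻¹ * (-1)) w :=
      (Complex.hasDerivAt_log (slit_one_sub hw1)).comp w hone_sub
    have h5 := (h1.add h2).add (h3.mul h4)
    have e1 : polylog 1 w = -Complex.log (1 - w) := polylog_one_eq hw1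
    have e2 : polylog 1 (1 - w) = -Complex.log w := by
      rw [polylog_one_eq hw2, show (1:ℂ) - (1 - w) = w by ring]
    have hval : polylog 1 w / w + polylog 1 (1 - w) / (1 - w) * (-1)
        + (w⁻¹ * Complex.log (1 - w) + Complex.log w * ((1 - w)⁻¹ * (-1))) = 0 := by
      rw [e1, e2]
      field_simp
      ring
    rw [hval] at h5
    exact h5
  have hlim : Filter.Tendsto (fun t : ℝ => polylog 2 (t:ℂ) + polylog 2 ((1:ℂ) - t)
      + Complex.log (t:ℂ) * Complex.log ((1:ℂ) - t)) (𝓝[>] (0:ℝ)) (𝓝 ((π : ℂ) ^ 2 / 6)) := by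
    have h := ((tendsto_polylog_ofReal le_rfl).add
      (tendsto_polylog_one_sub le_rfl)).add tendsto_log_mul_log
    rw [polylog_two_one] at h
    simpa using h
  exact eq_const_of_U hder hlim hz


/-! ### the weight-3 identity -/

lemma lvl3 {z : ℂ} (hz : z ∈ U) :
    F3 z = 2 * polylog 3 (1 - z)
      - Complex.log (1 - z) * (polylog 2 (1 - z) + (π : ℂ) ^ 2 / 6) - 2 * polylog 3 1 := by
  have hder : ∀ w ∈ U, HasDerivAt (fun z : ℂ => F3 z - (2 * polylog 3 (1 - z)
      - Complex.log (1 - z) * (polylog 2 (1 - z) + (π : ℂ) ^ 2 / 6) - 2 * polylog 3 1)) 0 w := by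
    intro w hw
    obtain ⟨hw1, hw2⟩ := mem_U_iff.mp hw
    have hw0 : w ≠ 0 := ne_zero_of_mem hw2
    have hw10 : (1:ℂ) - w ≠ 0 := one_sub_ne_zero hw1
    have hone_sub : HasDerivAt (fun y : ℂ => 1 - y) (-1) w := by
      simpa using (hasDerivAt_id w).const_sub 1
    have hF3 : HasDerivAt F3 (polylog 2 w / (1 - w)) w := hasDerivAt_F3 hw1
    have hp3 : HasDerivAt (fun y : ℂ => polylog 3 (1 - y))
        (polylog 2 (1 - w) / (1 - w) * (-1)) w := by
      have hp : HasDerivAt (polylog 3) (polylog 2 (1 - w) / (1 - w)) (1 - w) := by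
        have := hasDerivAt_polylog 2 hw2 hw10
        norm_num at this
        exact this
      exact hp.comp w hone_sub
    have hlog : HasDerivAt (fun y : ℂ => Complex.log (1 - y)) ((1 - w)⁻¹ * (-1)) w :=
      (Complex.hasDerivAt_log (slit_one_sub hw1)).comp w hone_sub
    have hp2 : HasDerivAt (fun y : ℂ => polylog 2 (1 - y))
        (polylog 1 (1 - w) / (1 - w) * (-1)) w := by
      have hp : HasDerivAt (polylog 2) (polylog 1 (1 - w) / (1 - w)) (1 - w) := by
        have := hasDerivAt_polylog 1 hw2 hw10
        norm_num at this
        exact this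
      exact hp.comp w hone_sub
    have hG := ((hp3.const_mul (2:ℂ)).sub
      (hlog.mul (hp2.add_const ((π : ℂ) ^ 2 / 6)))).sub_const (2 * polylog 3 1)
    have htot := hF3.sub hG
    have e2 : polylog 1 (1 - w) = -Complex.log w := by
      rw [polylog_one_eq hw2, show (1:ℂ) - (1 - w) = w by ring]
    rw [e2] at htot
    have heu := euler hw
    have hval : polylog 2 w / (1 - w) -
        (2 * (polylog 2 (1 - w) / (1 - w) * (-1)) -
          ((1 - w)⁻¹ * (-1) * (polylog 2 (1 - w) + (π : ℂ) ^ 2 / 6) +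
            Complex.log (1 - w) * (-Complex.log w / (1 - w) * (-1)))) = 0 := by
      linear_combination (1 - w)⁻¹ * heu
    rw [hval] at htot
    exact htot
  have hlim : Filter.Tendsto (fun t : ℝ => F3 ((t:ℂ)) - (2 * polylog 3 ((1:ℂ) - t)
      - Complex.log ((1:ℂ) - t) * (polylog 2 ((1:ℂ) - t) + (π : ℂ) ^ 2 / 6)
      - 2 * polylog 3 1)) (𝓝[>] (0:ℝ)) (𝓝 0) := by
    have hF3t : Filter.Tendsto (fun t : ℝ => F3 ((t:ℂ))) (𝓝[>] (0:ℝ)) (𝓝 0) := by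
      have h := (continuousAt_F3 (z := 0) (by simp)).tendsto.comp tendsto_ofReal_zero
      rwa [F3_zero] at h
    have h := hF3t.sub ((((tendsto_polylog_one_sub (s := 3) (by norm_num)).const_mul (2:ℂ)).sub
      (tendsto_log_one_sub.mul ((tendsto_polylog_one_sub (s := 2) (by norm_num)).add
        (tendsto_const_nhds (x := (π : ℂ) ^ 2 / 6))))).sub
        (tendsto_const_nhds (x := 2 * polylog 3 1)))
    have hval : (0:ℂ) = 0 - (2 * polylog 3 1 - 0 * (polylog 2 1 + (π : ℂ) ^ 2 / 6)
        - 2 * polylog 3 1) := by ring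
    rw [hval]
    exact h
  have h := eq_const_of_U hder hlim hz
  exact sub_eq_zero.mp h

/-! ### the weight-4 identity on `U` -/

lemma lvl4 {z : ℂ} (hz : z ∈ U) :
    F4 z = (π : ℂ) ^ 2 / 12 * (Complex.log (1 - z)) ^ 2
      + Complex.log (1 - z) * (polylog 3 (1 - z) + 2 * polylog 3 1)
      - 3 * polylog 4 (1 - z) + (π : ℂ) ^ 4 / 30 := by
  have hder : ∀ w ∈ U, HasDerivAt (fun z : ℂ => F4 z -
      ((π : ℂ) ^ 2 / 12 * (Complex.log (1 - z)) ^ 2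
      + Complex.log (1 - z) * (polylog 3 (1 - z) + 2 * polylog 3 1)
      - 3 * polylog 4 (1 - z) + (π : ℂ) ^ 4 / 30)) 0 w := by
    intro w hw
    obtain ⟨hw1, hw2⟩ := mem_U_iff.mp hw
    have hw10 : (1:ℂ) - w ≠ 0 := one_sub_ne_zero hw1
    have hone_sub : HasDerivAt (fun y : ℂ => 1 - y) (-1) w := by
      simpa using (hasDerivAt_id w).const_sub 1
    have hF4 : HasDerivAt F4 (F3 w / (1 - w)) w := hasDerivAt_F4 hw1
    have hlog : HasDerivAt (fun y : ℂ => Complex.log (1 - y)) ((1 - w)⁻¹ * (-1)) w :=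
      (Complex.hasDerivAt_log (slit_one_sub hw1)).comp w hone_sub
    have hp3 : HasDerivAt (fun y : ℂ => polylog 3 (1 - y))
        (polylog 2 (1 - w) / (1 - w) * (-1)) w := by
      have hp : HasDerivAt (polylog 3) (polylog 2 (1 - w) / (1 - w)) (1 - w) := by
        have := hasDerivAt_polylog 2 hw2 hw10
        norm_num at this
        exact this
      exact hp.comp w hone_sub
    have hp4 : HasDerivAt (fun y : ℂ => polylog 4 (1 - y))
        (polylog 3 (1 - w) / (1 - w) * (-1)) w := by
      have hp : HasDerivAt (polylog 4) (polylog 3 (1 - w) / (1 - w)) (1 - w) := by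
        have := hasDerivAt_polylog 3 hw2 hw10
        norm_num at this
        exact this
      exact hp.comp w hone_sub
    have hG := ((((hlog.pow 2).const_mul ((π : ℂ) ^ 2 / 12)).add
      (hlog.mul (hp3.add_const (2 * polylog 3 1)))).sub
        (hp4.const_mul (3:ℂ))).add_const ((π : ℂ) ^ 4 / 30)
    have htot := hF4.sub hG
    have hl3 := lvl3 hw
    have hval : F3 w / (1 - w) -
        ((π : ℂ) ^ 2 / 12 * ((2:ℕ) * Complex.log (1 - w) ^ (2 - 1) * ((1 - w)⁻¹ * (-1))) +
          ((1 - w)⁻¹ * (-1) * (polylog 3 (1 - w) + 2 * polylog 3 1) +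
            Complex.log (1 - w) * (polylog 2 (1 - w) / (1 - w) * (-1))) -
          3 * (polylog 3 (1 - w) / (1 - w) * (-1))) = 0 := by
      linear_combination (1 - w)⁻¹ * hl3
    rw [hval] at htot
    exact htot
  have hlim : Filter.Tendsto (fun t : ℝ => F4 ((t:ℂ)) -
      ((π : ℂ) ^ 2 / 12 * (Complex.log ((1:ℂ) - t)) ^ 2
      + Complex.log ((1:ℂ) - t) * (polylog 3 ((1:ℂ) - t) + 2 * polylog 3 1)
      - 3 * polylog 4 ((1:ℂ) - t) + (π : ℂ) ^ 4 / 30)) (𝓝[>] (0:ℝ)) (𝓝 0) := by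
    have hF4t : Filter.Tendsto (fun t : ℝ => F4 ((t:ℂ))) (𝓝[>] (0:ℝ)) (𝓝 0) := by
      have h := (continuousAt_F4 (z := 0) (by simp)).tendsto.comp tendsto_ofReal_zero
      rwa [F4_zero] at h
    have h := hF4t.sub (((((tendsto_log_one_sub.pow 2).const_mul ((π : ℂ) ^ 2 / 12)).add
      (tendsto_log_one_sub.mul ((tendsto_polylog_one_sub (s := 3) (by norm_num)).add
        (tendsto_const_nhds (x := 2 * polylog 3 1))))).sub
      ((tendsto_polylog_one_sub (s := 4) (by norm_num)).const_mul (3:ℂ))).add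
        (tendsto_const_nhds (x := (π : ℂ) ^ 4 / 30)))
    have hval : (0:ℂ) = 0 - ((π : ℂ) ^ 2 / 12 * 0 ^ 2 + 0 * (polylog 3 1 + 2 * polylog 3 1)
        - 3 * polylog 4 1 + (π : ℂ) ^ 4 / 30) := by
      rw [polylog_four_one]
      ring
    rw [hval]
    exact h
  have h := eq_const_of_U hder hlim hz
  exact sub_eq_zero.mp h


/-! ### reindexing the triple sum -/

def e3 : ((ℕ × ℕ) × ℕ) ≃ {n : Fin 3 → ℕ // StrictMono n ∧ 0 < n 0} where
  toFun p := ⟨![p.1.1 + 1, p.1.1 + p.1.2 + 2, p.1.1 + p.1.2 + p.2 + 3], by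
    constructor
    · intro i j hij
      fin_cases i <;> fin_cases j <;> simp_all [Fin.lt_def] <;> omega
    · simp⟩
  invFun n := ((n.1 0 - 1, n.1 1 - n.1 0 - 1), n.1 2 - n.1 1 - 1)
  left_inv p := by
    obtain ⟨⟨a, b⟩, c⟩ := p
    simp [Prod.ext_iff]
    omega
  right_inv n := by
    obtain ⟨n, hmono, hpos⟩ := n
    have h01 : n 0 < n 1 := hmono (by decide : (0 : Fin 3) < 1)
    have h12 : n 1 < n 2 := hmono (by decide : (1 : Fin 3) < 2)
    apply Subtype.ext
    funext i
    fin_cases i <;> simp <;> omega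

lemma multiPolylog_eq_F4 (z : ℂ) : multiPolylog ![2, 1, 1] z = F4 z := by
  rw [multiPolylog, ← Equiv.tsum_eq e3]
  refine tsum_congr fun p => ?_
  obtain ⟨⟨a, b⟩, c⟩ := p
  show z ^ ((![a + 1, a + b + 2, a + b + c + 3] : Fin 3 → ℕ) (Fin.last 2)) /
      ∏ i : Fin 3, (((![a + 1, a + b + 2, a + b + c + 3] : Fin 3 → ℕ) i : ℕ) : ℂ)
        ^ ((![2, 1, 1] : Fin 3 → ℕ) i) = _
  rw [Fin.prod_univ_three]
  have hlast : (Fin.last 2) = (2 : Fin 3) := rfl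
  rw [hlast]
  simp only [Matrix.cons_val_zero, Matrix.cons_val_one, Matrix.head_cons,
    Matrix.cons_val_two, Matrix.tail_cons]
  push_cast
  ring


lemma norm_one_sub_phi {z : ℂ} (ε : ℝ) :
    ‖(1:ℂ) - (1 - ((1 - ε : ℝ) : ℂ) * (1 - z))‖ = |1 - ε| * ‖1 - z‖ := by
  rw [show (1:ℂ) - (1 - ((1 - ε : ℝ) : ℂ) * (1 - z)) = ((1 - ε : ℝ) : ℂ) * (1 - z) by ring,
    norm_mul, Complex.norm_real, Real.norm_eq_abs]

end MPAux

open Metric Filter Topology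

/-- For `|z| < 1` and `|1−z| ≤ 1`:
`Li_{2,1,1}(z) = (π²/12)·log²(1−z) + log(1−z)·(Li₃(1−z) + 2ζ(3)) − 3·Li₄(1−z) + π⁴/30`,
where `ζ(3) = Σ_{n≥1} 1/n³ = Li₃(1)`. -/
theorem multiPolylog_two_one_one_eq (z : ℂ) (hz1 : ‖z‖ < 1) (hz2 : ‖1 - z‖ ≤ 1) :
    multiPolylog ![2, 1, 1] z =
      ((π : ℂ) ^ 2 / 12) * (Complex.log (1 - z)) ^ 2 +
        Complex.log (1 - z) * (polylog 3 (1 - z) + 2 * polylog 3 1) -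
        3 * polylog 4 (1 - z) + (π : ℂ) ^ 4 / 30 := by
  rw [MPAux.multiPolylog_eq_F4]
  set φ : ℝ → ℂ := fun ε => 1 - ((1 - ε : ℝ) : ℂ) * (1 - z) with hφdef
  have hδ : 0 < min 1 (1 - ‖z‖) := lt_min one_pos (by linarith)
  have hmemU : ∀ ε ∈ Set.Ioo (0:ℝ) (min 1 (1 - ‖z‖)), φ ε ∈ MPAux.U := by
    intro ε hε
    have hε0 : 0 < ε := hε.1
    have hε1 : ε < 1 := lt_of_lt_of_le hε.2 (min_le_left _ _)
    have hε2 : ε < 1 - ‖z‖ := lt_of_lt_of_le hε.2 (min_le_right _ _)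
    rw [MPAux.mem_U_iff]
    constructor
    · have hrw : φ ε = z + ((ε : ℝ) : ℂ) * (1 - z) := by
        rw [hφdef]; push_cast; ring
      rw [hrw]
      calc ‖z + ((ε : ℝ) : ℂ) * (1 - z)‖ ≤ ‖z‖ + ‖((ε : ℝ) : ℂ) * (1 - z)‖ := norm_add_le _ _
        _ = ‖z‖ + |ε| * ‖1 - z‖ := by rw [norm_mul, Complex.norm_real, Real.norm_eq_abs]
        _ ≤ ‖z‖ + ε * 1 := by
            rw [abs_of_pos hε0]
            gcongr
        _ < 1 := by linarith
    · rw [MPAux.norm_one_sub_phi, abs_of_pos (by linarith)]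
      calc (1 - ε) * ‖1 - z‖ ≤ (1 - ε) * 1 := by gcongr
        _ < 1 := by linarith
  have hφlim : Filter.Tendsto φ (𝓝[>] (0:ℝ)) (𝓝 z) := by
    have hc : Continuous φ := by
      rw [hφdef]; fun_prop
    have h := (hc.tendsto 0).mono_left (nhdsWithin_le_nhds (s := Set.Ioi (0:ℝ)))
    have h0 : φ 0 = z := by rw [hφdef]; push_cast; ring
    rwa [h0] at h
  have hwlim : Filter.Tendsto (fun ε => (1:ℂ) - φ ε) (𝓝[>] (0:ℝ)) (𝓝 (1 - z)) :=
    tendsto_const_nhds.sub hφlim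
  have hwmem : ∀ᶠ ε : ℝ in 𝓝[>] (0:ℝ), (1:ℂ) - φ ε ∈ closedBall (0:ℂ) 1 := by
    filter_upwards [MPAux.eventually_Ioo hδ (min_le_left _ _)] with ε hε
    have hε1 : ε < 1 := lt_of_lt_of_le hε.2 (min_le_left _ _)
    rw [mem_closedBall, dist_eq_norm, sub_zero, MPAux.norm_one_sub_phi,
      abs_of_pos (by linarith [hε.1])]
    have h01 : (0:ℝ) ≤ 1 - ε := by linarith
    nlinarith [norm_nonneg ((1:ℂ) - z), hε.1]
  have hwlim' : Filter.Tendsto (fun ε => (1:ℂ) - φ ε) (𝓝[>] (0:ℝ))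
      (𝓝[closedBall (0:ℂ) 1] (1 - z)) :=
    tendsto_nhdsWithin_of_tendsto_nhds_of_eventually_within _ hwlim hwmem
  have hslit : (1:ℂ) - z ∈ Complex.slitPlane := MPAux.slit_one_sub hz1
  have hlog : Filter.Tendsto (fun ε => Complex.log ((1:ℂ) - φ ε)) (𝓝[>] (0:ℝ))
      (𝓝 (Complex.log (1 - z))) :=
    (continuousAt_clog hslit).tendsto.comp hwlim
  have hp3 : Filter.Tendsto (fun ε => polylog 3 ((1:ℂ) - φ ε)) (𝓝[>] (0:ℝ))
      (𝓝 (polylog 3 (1 - z))) :=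
    ((MPAux.continuousWithinAt_polylog (s := 3) (by norm_num) hz2).tendsto).comp hwlim'
  have hp4 : Filter.Tendsto (fun ε => polylog 4 ((1:ℂ) - φ ε)) (𝓝[>] (0:ℝ))
      (𝓝 (polylog 4 (1 - z))) :=
    ((MPAux.continuousWithinAt_polylog (s := 4) (by norm_num) hz2).tendsto).comp hwlim'
  have hRHS : Filter.Tendsto (fun ε => ((π : ℂ) ^ 2 / 12) * (Complex.log ((1:ℂ) - φ ε)) ^ 2 +
      Complex.log ((1:ℂ) - φ ε) * (polylog 3 ((1:ℂ) - φ ε) + 2 * polylog 3 1) -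
      3 * polylog 4 ((1:ℂ) - φ ε) + (π : ℂ) ^ 4 / 30) (𝓝[>] (0:ℝ))
      (𝓝 (((π : ℂ) ^ 2 / 12) * (Complex.log (1 - z)) ^ 2 +
        Complex.log (1 - z) * (polylog 3 (1 - z) + 2 * polylog 3 1) -
        3 * polylog 4 (1 - z) + (π : ℂ) ^ 4 / 30)) := by
    exact ((((hlog.pow 2).const_mul ((π : ℂ) ^ 2 / 12)).add
      (hlog.mul (hp3.add tendsto_const_nhds))).sub
      (hp4.const_mul (3:ℂ))).add tendsto_const_nhds
  have hLHS : Filter.Tendsto (fun ε => MPAux.F4 (φ ε)) (𝓝[>] (0:ℝ)) (𝓝 (MPAux.F4 z)) :=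
    (MPAux.continuousAt_F4 hz1).tendsto.comp hφlim
  have hev : ∀ᶠ ε : ℝ in 𝓝[>] (0:ℝ), MPAux.F4 (φ ε) =
      ((π : ℂ) ^ 2 / 12) * (Complex.log ((1:ℂ) - φ ε)) ^ 2 +
      Complex.log ((1:ℂ) - φ ε) * (polylog 3 ((1:ℂ) - φ ε) + 2 * polylog 3 1) -
      3 * polylog 4 ((1:ℂ) - φ ε) + (π : ℂ) ^ 4 / 30 := by
    filter_upwards [MPAux.eventually_Ioo hδ (min_le_left _ _)] with ε hε
    exact MPAux.lvl4 (hmemU ε hε)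
  have hLHS' := hLHS.congr' hev
  exact tendsto_nhds_unique hLHS' hRHS
end
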